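/- arXiv:2208.03539 — 2 statements merged into one kernel-verified Lean document; each statement's English description precedes it below -/
import Mathlib

section
/- Let r, s ∈ ℕ with m := max(r,s) ≥ 1, let K be a field of characteristic zero, and for parameters a_1,…,a_r, b_1,…,b_s ∈ K (with b_j + q ≠ 0 for every integer q ≥ 0) and indices 1 ≤ λ_1 < ⋯ < λ_s ≤ r (when r ≥ s; λ_j := j when r ≤ s) write P_n^{(λ_1,…,λ_s)}(x | a_1,…,a_r; b_1,…,b_s) = Σ_{k=0}^{n} (−1)^k C(n,k) [ ∏_{i=1}^{r} (a_i+n−k)_k / ∏_{j=1}^{s} (b_j + ⌈(n−λ_j)/m⌉ + n−k)_k ] x^{n−k}. Then for every n ≥ 1: (i) if r ≥ s and λ_1 = 1, (d/dx) P_n^{(λ_1,…,λ_s)}(x | a_1,…,a_r; b_1,…,b_s) = n · P_{n−1}^{(λ_2−1,…,λ_s−1,r)}(x | a_1+1,…,a_r+1; b_2+1,…,b_s+1, b_1+2); (ii) if r ≥ s and λ_1 ≥ 2, (d/dx) P_n^{(λ_1,…,λ_s)}(x | a_1,…,a_r; b_1,…,b_s) = n · P_{n−1}^{(λ_1−1,…,λ_s−1)}(x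 | a_1+1,…,a_r+1; b_1+1,…,b_s+1); (iii) if r ≤ s (so λ_j = j), (d/dx) P_n(x | a_1,…,a_r; b_1,…,b_s) = n · P_{n−1}(x | a_1+1,…,a_r+1; b_2+1,…,b_s+1, b_1+2). -/
open Finset Polynomial

/-- The type II multiple orthogonal polynomials on the step-line:
`P_n^{(λ_1,…,λ_s)}(x | a; b)
  = Σ_{k=0}^{n} (−1)^k C(n,k) [∏_i (a_i+n−k)_k / ∏_j (b_j+⌈(n−λ_j)/m⌉+n−k)_k] x^{n−k}`. -/
noncomputable def polyP {K : Type*} [Field K] (r s m : ℕ) (lam : ℕ → ℕ) (a b : ℕ → K)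
    (n : ℕ) : Polynomial K :=
  ∑ k ∈ Finset.range (n + 1),
    Polynomial.C ((-1) ^ k * (n.choose k : K) *
        (∏ i ∈ Finset.Icc 1 r,
          (ascPochhammer K k).eval (a i + ((n - k : ℕ) : K))) /
        ∏ j ∈ Finset.Icc 1 s,
          (ascPochhammer K k).eval
            (b j + ((⌈(((n : ℤ) - (lam j : ℤ) : ℤ) : ℚ) / (m : ℚ)⌉ : ℤ) : K) +
              ((n - k : ℕ) : K))) *
      Polynomial.X ^ (n - k)

lemma nat_id (n k : ℕ) (hk : k < n) : (n - k) * n.choose k = n * (n-1).choose k := by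
  calc (n - k) * n.choose k = n.choose k * (n-k) := Nat.mul_comm _ _
    _ = n.choose (k+1) * (k+1) := (Nat.choose_succ_right_eq n k).symm
    _ = (n-1+1).choose (k+1) * (k+1) := by rw [Nat.sub_add_cancel (by omega : 1 ≤ n)]
    _ = (n-1).succ * (n-1).choose k := (Nat.add_one_mul_choose_eq (n-1) k).symm
    _ = n * (n-1).choose k := by
        rw [Nat.succ_eq_add_one, Nat.sub_add_cancel (by omega : 1 ≤ n)]

lemma coeff_finish {K : Type*} [Field K] [CharZero K] (n k : ℕ) (hk : k < n) (A B : K) :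
    ((n - k : ℕ) : K) * ((-1)^k * (n.choose k : K) * A / B)
      = (n : K) * ((-1)^k * ((n-1).choose k : K) * A / B) := by
  have h : ((n - k : ℕ) : K) * (n.choose k : K) = (n : K) * ((n-1).choose k : K) := by
    exact_mod_cast congrArg (Nat.cast : ℕ → K) (nat_id n k hk)
  rw [div_eq_mul_inv, div_eq_mul_inv]
  linear_combination ((-1:K)^k * A * B⁻¹) * h

lemma cast_sub_one {K : Type*} [Field K] [CharZero K] (n k : ℕ) (hk : k < n) :
    ((n - 1 - k : ℕ) : K) = ((n - k : ℕ) : K) - 1 := by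
  rw [show n - 1 - k = (n - k) - 1 from by omega,
    Nat.cast_sub (by omega : 1 ≤ n - k), Nat.cast_one]

lemma ceil_shift (m : ℕ) (hm : 1 ≤ m) (x : ℤ) :
    ⌈((x - m : ℤ) : ℚ) / (m : ℚ)⌉ = ⌈((x : ℤ) : ℚ) / (m : ℚ)⌉ - 1 := by
  have hm0 : (m : ℚ) ≠ 0 := by positivity
  rw [show ((x - m : ℤ) : ℚ) = (x : ℚ) - m by push_cast; ring, sub_div, div_self hm0,
    Int.ceil_sub_one]

lemma deriv_aux {K : Type*} [Field K] (n : ℕ) (c c' : ℕ → K)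
    (h : ∀ k, k < n → ((n - k : ℕ) : K) * c k = (n : K) * c' k) :
    derivative (∑ k ∈ Finset.range (n+1), C (c k) * X ^ (n - k))
      = C (n : K) * ∑ k ∈ Finset.range n, C (c' k) * X ^ (n - 1 - k) := by
  rw [Finset.sum_range_succ, derivative_add, Nat.sub_self, pow_zero, mul_one, derivative_C,
    add_zero, derivative_sum, Finset.mul_sum]
  refine Finset.sum_congr rfl fun k hk => ?_
  rw [Finset.mem_range] at hk
  rw [derivative_C_mul, derivative_X_pow, show n - k - 1 = n - 1 - k from by omega,
    ← mul_assoc, ← C_mul, mul_comm (c k), h k hk, C_mul, mul_assoc]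

lemma prod_rotate' {M : Type*} [CommMonoid M] (s : ℕ) (f g : ℕ → M)
    (hlast : 1 ≤ s → g s = f 1)
    (hmid : ∀ j, 1 ≤ j → j < s → g j = f (j+1)) :
    ∏ j ∈ Icc 1 s, g j = ∏ j ∈ Icc 1 s, f j := by
  refine Finset.prod_nbij' (fun j => if j = s then 1 else j + 1)
    (fun j => if j = 1 then s else j - 1) ?_ ?_ ?_ ?_ ?_
  · intro j hj; simp only [mem_Icc] at *; split <;> omega
  · intro j hj; simp only [mem_Icc] at *; split <;> omega
  · intro j hj; simp only [mem_Icc] at hj; split_ifs <;> omega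
  · intro j hj; simp only [mem_Icc] at hj; split_ifs <;> omega
  · intro j hj; simp only [mem_Icc] at hj
    rcases eq_or_ne j s with h | h
    · subst h; rw [if_pos rfl]; exact hlast hj.1
    · rw [if_neg h]; exact hmid j hj.1 (by omega)

lemma polyP_deriv {K : Type*} [Field K] [CharZero K] (r s m : ℕ) (lam lam' : ℕ → ℕ)
    (a b b' : ℕ → K) (n : ℕ) (hn : 1 ≤ n)
    (hprod : ∀ k, k < n →
      (∏ j ∈ Icc 1 s, (ascPochhammer K k).eval
          (b' j + ((⌈((((n - 1 : ℕ) : ℤ) - (lam' j : ℤ) : ℤ) : ℚ) / (m : ℚ)⌉ : ℤ) : K) +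
            ((n - 1 - k : ℕ) : K)))
        = ∏ j ∈ Icc 1 s, (ascPochhammer K k).eval
          (b j + ((⌈(((n : ℤ) - (lam j : ℤ) : ℤ) : ℚ) / (m : ℚ)⌉ : ℤ) : K) +
            ((n - k : ℕ) : K))) :
    derivative (polyP r s m lam a b n)
      = C (n : K) * polyP r s m lam' (fun i => a i + 1) b' (n - 1) := by
  simp only [polyP]
  rw [show n - 1 + 1 = n from by omega]
  refine deriv_aux n _ _ fun k hk => ?_
  have hA : (∏ i ∈ Icc 1 r, (ascPochhammer K k).eval (a i + 1 + ((n - 1 - k : ℕ) : K)))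
      = ∏ i ∈ Icc 1 r, (ascPochhammer K k).eval (a i + ((n - k : ℕ) : K)) := by
    refine Finset.prod_congr rfl fun i _ => ?_
    congr 1
    rw [cast_sub_one n k hk]; ring
  rw [hprod k hk, hA]
  exact coeff_finish n k hk _ _

/-- Differentiation acts on the hypergeometric multiple orthogonal polynomials as a shift
of the parameters: the three cases `r ≥ s, λ_1 = 1`; `r ≥ s, λ_1 ≥ 2`; and `r ≤ s`. -/
theorem stmt15 {K : Type*} [Field K] [CharZero K]
    (r s : ℕ) (hm : 1 ≤ max r s)
    (lam : ℕ → ℕ) (a b : ℕ → K)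
    (hb : ∀ j, 1 ≤ j → j ≤ s → ∀ q : ℕ, b j + (q : K) ≠ 0)
    (n : ℕ) (hn : 1 ≤ n) :
    (s ≤ r →
      (∀ j, 1 ≤ j → j ≤ s → 1 ≤ lam j ∧ lam j ≤ r) →
      (∀ j j', 1 ≤ j → j < j' → j' ≤ s → lam j < lam j') →
      lam 1 = 1 →
      Polynomial.derivative (polyP r s (max r s) lam a b n)
        = Polynomial.C (n : K) *
            polyP r s (max r s)
              (fun j => if j = s then r else lam (j + 1) - 1)
              (fun i => a i + 1)
              (fun j => if j = s then b 1 + 2 else b (j + 1) + 1) (n - 1)) ∧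
    (s ≤ r →
      (∀ j, 1 ≤ j → j ≤ s → 1 ≤ lam j ∧ lam j ≤ r) →
      (∀ j j', 1 ≤ j → j < j' → j' ≤ s → lam j < lam j') →
      2 ≤ lam 1 →
      Polynomial.derivative (polyP r s (max r s) lam a b n)
        = Polynomial.C (n : K) *
            polyP r s (max r s)
              (fun j => lam j - 1)
              (fun i => a i + 1)
              (fun j => b j + 1) (n - 1)) ∧
    (r ≤ s →
      (∀ j, 1 ≤ j → j ≤ s → lam j = j) →
      Polynomial.derivative (polyP r s (max r s) lam a b n)
        = Polynomial.C (n : K) *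
            polyP r s (max r s) lam
              (fun i => a i + 1)
              (fun j => if j = s then b 1 + 2 else b (j + 1) + 1) (n - 1)) := by
  refine ⟨?_, ?_, ?_⟩
  · -- case (i): r ≥ s, λ₁ = 1
    intro hsr hlam hlt hl1
    have hmr : max r s = r := max_eq_left hsr
    refine polyP_deriv r s (max r s) lam _ a b _ n hn fun k hk => ?_
    refine prod_rotate' s _ _ (fun hs1 => ?_) (fun j hj1 hjs => ?_)
    · rw [if_pos rfl, if_pos rfl]
      congr 1
      have hz : ((n - 1 : ℕ) : ℤ) - ((r : ℕ) : ℤ) = ((n : ℤ) - 1) - ((max r s : ℕ) : ℤ) := by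
        rw [hmr]; omega
      have hz1 : (n : ℤ) - ((lam 1 : ℕ) : ℤ) = (n : ℤ) - 1 := by rw [hl1]; simp
      rw [hz, hz1, ceil_shift (max r s) hm ((n : ℤ) - 1), Int.cast_sub, Int.cast_one,
        cast_sub_one n k hk]
      ring
    · rw [if_neg (by omega : ¬ j = s), if_neg (by omega : ¬ j = s)]
      congr 1
      have hz : ((n - 1 : ℕ) : ℤ) - ((lam (j + 1) - 1 : ℕ) : ℤ)
          = (n : ℤ) - ((lam (j + 1) : ℕ) : ℤ) := by
        have := (hlam (j + 1) (by omega) (by omega)).1; omega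
      rw [hz, cast_sub_one n k hk]
      ring
  · -- case (ii): r ≥ s, λ₁ ≥ 2
    intro hsr hlam hlt hl1
    refine polyP_deriv r s (max r s) lam _ a b _ n hn fun k hk => ?_
    refine Finset.prod_congr rfl fun j hj => ?_
    rw [mem_Icc] at hj
    congr 1
    have hz : ((n - 1 : ℕ) : ℤ) - ((lam j - 1 : ℕ) : ℤ) = (n : ℤ) - ((lam j : ℕ) : ℤ) := by
      have := (hlam j hj.1 hj.2).1; omega
    rw [hz, cast_sub_one n k hk]
    ring
  · -- case (iii): r ≤ s
    intro hrs hlameq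
    have hms : max r s = s := max_eq_right hrs
    refine polyP_deriv r s (max r s) lam lam a b _ n hn fun k hk => ?_
    refine prod_rotate' s _ _ (fun hs1 => ?_) (fun j hj1 hjs => ?_)
    · rw [if_pos rfl]
      congr 1
      have hz : ((n - 1 : ℕ) : ℤ) - ((lam s : ℕ) : ℤ)
          = ((n : ℤ) - 1) - ((max r s : ℕ) : ℤ) := by
        rw [hlameq s hs1 le_rfl, hms]; omega
      have hz1 : (n : ℤ) - ((lam 1 : ℕ) : ℤ) = (n : ℤ) - 1 := by
        rw [hlameq 1 le_rfl hs1]; simp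
      rw [hz, hz1, ceil_shift (max r s) hm ((n : ℤ) - 1), Int.cast_sub, Int.cast_one,
        cast_sub_one n k hk]
      ring
    · rw [if_neg (by omega : ¬ j = s)]
      congr 1
      have hz : ((n - 1 : ℕ) : ℤ) - ((lam j : ℕ) : ℤ)
          = (n : ℤ) - ((lam (j + 1) : ℕ) : ℤ) := by
        rw [hlameq j hj1 (by omega), hlameq (j + 1) (by omega) (by omega)]; omega
      rw [hz, cast_sub_one n k hk]
      ring
end

section
/- Let r, s ∈ ℕ with m := max(r,s) ≥ 1, with indices 1 ≤ λ_1 < ⋯ < λ_s ≤ r when r ≥ s (and λ_j := j, together with 1 ≤ σ_1 < ⋯ < σ_r ≤ s, σ_{r+1} = s+1, when r ≤ s). Let K be a field of characteristic zero and a_1,…,a_r, b_1,…,b_s ∈ K with b_j + q ≠ 0 for every integer q ≥ −1 and every j. Let (α_{k+m})_{k∈ℕ} be the branched-continued-fraction coefficients with a_{r+1} := 1 (as in the r ≥ s formula with a_i^{(k)} = a_i + ⌈(k+1−i)/(r+1)⌉, b_j^{(k)} = b_j + ⌈(k+1−λ_j)/r⌉, or the r ≤ s formula with a_i^{(k)}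 = a_i + ⌈(k+1−σ_i)/(s+1)⌉, b_j^{(k)} = b_j + ⌈(k+1−j)/s⌉), with α_i := 0 for 0 ≤ i ≤ m−1, and let D : ℕ×ℕ → K be the partial m-Dyck path polynomials with weights α. Then the generalised m-Stieltjes–Rogers polynomials are given explicitly by: for all n, k ∈ ℕ with k ≤ n, D((m+1)n, (m+1)k) = C(n,k) · ∏_{i=1}^{r} (a_i + k)_{n−k} / ∏_{j=1}^{s} (b_j^{(k)} + k)_{n−k}, where b_j^{(k)} = b_j + ⌈(k+1−λ_j)/m⌉. -/
open Finset Polynomial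

/-- `dyckD m α x y` is the generating polynomial of partial `m`-Dyck paths from `(0,0)` to
`(x,y)`, with rises of weight `1` and `m`-falls from height `i` of weight `α i`. -/
def dyckD {K : Type*} [Field K] (m : ℕ) (α : ℕ → K) : ℕ → ℕ → K
  | 0, 0 => 1
  | 0, _ + 1 => 0
  | x + 1, 0 => α m * dyckD m α x m
  | x + 1, y + 1 => dyckD m α x y + α (y + 1 + m) * dyckD m α x (y + 1 + m)

/-- `a_i^{(k)} = a_i + ⌈(k+1−i)/(r+1)⌉` (case `r ≥ s`). -/
noncomputable def aShift {K : Type*} [Field K] (r : ℕ) (a : ℕ → K) (k : ℤ) (i : ℕ) : K :=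
  a i + ((⌈((k + 1 - (i : ℤ) : ℤ) : ℚ) / ((r : ℚ) + 1)⌉ : ℤ) : K)

/-- `b_j^{(k)} = b_j + ⌈(k+1−λ_j)/r⌉` (case `r ≥ s`). -/
noncomputable def bShift {K : Type*} [Field K] (r : ℕ) (lam : ℕ → ℕ) (b : ℕ → K)
    (k : ℤ) (j : ℕ) : K :=
  b j + ((⌈((k + 1 - (lam j : ℤ) : ℤ) : ℚ) / (r : ℚ)⌉ : ℤ) : K)

/-- `a_i^{(k)} = a_i + ⌈(k+1−σ_i)/(s+1)⌉` (case `r ≤ s`). -/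
noncomputable def aShift' {K : Type*} [Field K] (s : ℕ) (sig : ℕ → ℕ) (a : ℕ → K)
    (k : ℤ) (i : ℕ) : K :=
  a i + ((⌈((k + 1 - (sig i : ℤ) : ℤ) : ℚ) / ((s : ℚ) + 1)⌉ : ℤ) : K)

/-- `b_j^{(k)} = b_j + ⌈(k+1−j)/s⌉` (case `r ≤ s`). -/
noncomputable def bShift' {K : Type*} [Field K] (s : ℕ) (b : ℕ → K) (k : ℤ) (j : ℕ) : K :=
  b j + ((⌈((k + 1 - (j : ℤ) : ℤ) : ℚ) / (s : ℚ)⌉ : ℤ) : K)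

/-- `[k]_n`, the unique element of `{1,…,n}` congruent to `k` modulo `n`. -/
def modIdx (k n : ℕ) : ℕ := ((((k : ℤ) - 1) % (n : ℤ)) + 1).toNat



namespace Stmt16Aux

lemma poch_succ_left_eval {K : Type*} [Field K] (e : ℕ) (z : K) :
    (ascPochhammer K (e+1)).eval z = z * (ascPochhammer K e).eval (z+1) := by
  rw [ascPochhammer_succ_left]
  simp [eval_comp]

lemma poch_swap {K : Type*} [Field K] (e : ℕ) (z : K) :
    (ascPochhammer K e).eval z * (z + e) = z * (ascPochhammer K e).eval (z+1) := by
  rw [← ascPochhammer_succ_eval, poch_succ_left_eval]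

lemma poch_ne_zero {K : Type*} [Field K] {c : K} (h : ∀ q : ℕ, c + q ≠ 0) (d : ℕ) :
    (ascPochhammer K d).eval c ≠ 0 := by
  induction d with
  | zero => simp
  | succ e ih =>
      rw [ascPochhammer_succ_eval]
      exact mul_ne_zero ih (h e)

lemma ceil_shift (t : ℤ) (n : ℕ) (hn : 0 < n) :
    ⌈((t + (n:ℤ) : ℤ) : ℚ) / (n : ℚ)⌉ = ⌈(t : ℚ) / (n:ℚ)⌉ + 1 := by
  have hn' : (n : ℚ) ≠ 0 := by positivity
  push_cast
  rw [add_div, div_self hn', Int.ceil_add_one]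

lemma le_mul_ceil (t : ℤ) (n : ℕ) (hn : 0 < n) : t ≤ (n:ℤ) * ⌈(t : ℚ) / (n:ℚ)⌉ := by
  have h1 : (t : ℚ) / (n:ℚ) ≤ (⌈(t : ℚ) / (n:ℚ)⌉ : ℚ) := Int.le_ceil _
  have hn' : (0:ℚ) < (n : ℚ) := by positivity
  have h2 := (div_le_iff₀ hn').mp h1
  have h3 : (t:ℚ) ≤ (((n:ℤ) * ⌈(t : ℚ) / (n:ℚ)⌉ : ℤ) : ℚ) := by push_cast; linarith [h2]
  exact_mod_cast h3

lemma ceil_succ_of_dvd (t : ℤ) (n : ℕ) (hn : 0 < n) (h : (n:ℤ) ∣ t) :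
    ⌈((t + 1 : ℤ) : ℚ) / (n:ℚ)⌉ = ⌈(t : ℚ) / (n:ℚ)⌉ + 1 := by
  obtain ⟨c, rfl⟩ := h
  have hn' : (0:ℚ) < (n : ℚ) := by positivity
  have hne : (n:ℚ) ≠ 0 := ne_of_gt hn'
  push_cast
  rw [show ((n:ℚ) * (c:ℚ)) / (n:ℚ) = (c:ℚ) by field_simp,
    show ((n:ℚ) * (c:ℚ) + 1) / (n:ℚ) = 1/(n:ℚ) + (c:ℚ) by field_simp; ring,
    Int.ceil_add_intCast, Int.ceil_intCast]
  have hone : ⌈(1/(n:ℚ))⌉ = 1 := by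
    apply le_antisymm
    · rw [Int.ceil_le]
      push_cast
      rw [div_le_one hn']
      exact_mod_cast hn
    · have : (0:ℤ) < ⌈(1/(n:ℚ))⌉ := by
        rw [Int.lt_ceil]
        positivity
      omega
  omega

lemma ceil_succ_of_not_dvd (t : ℤ) (n : ℕ) (hn : 0 < n) (h : ¬ (n:ℤ) ∣ t) :
    ⌈((t + 1 : ℤ) : ℚ) / (n:ℚ)⌉ = ⌈(t : ℚ) / (n:ℚ)⌉ := by
  have hn' : (0:ℚ) < (n : ℚ) := by positivity
  have hle : t + 1 ≤ (n:ℤ) * ⌈(t : ℚ) / (n:ℚ)⌉ := by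
    have h1 := le_mul_ceil t n hn
    rcases lt_or_eq_of_le h1 with h' | h'
    · omega
    · exact absurd ⟨_, h'⟩ h
  apply le_antisymm
  · rw [Int.ceil_le, div_le_iff₀ hn']
    have : ((t:ℚ) + 1) ≤ (((n:ℤ) * ⌈(t : ℚ) / (n:ℚ)⌉ : ℤ) : ℚ) := by exact_mod_cast hle
    push_cast at this ⊢
    linarith
  · apply Int.ceil_le_ceil
    push_cast
    gcongr
    linarith

end Stmt16Aux



namespace Stmt16Aux

lemma modIdx_bound {y n : ℕ} (hn : 0 < n) : 1 ≤ modIdx y n ∧ modIdx y n ≤ n := by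
  unfold modIdx
  have hn' : (0:ℤ) < (n:ℤ) := by exact_mod_cast hn
  have h1 : 0 ≤ ((y:ℤ) - 1) % (n:ℤ) := Int.emod_nonneg _ (by omega)
  have h2 : ((y:ℤ) - 1) % (n:ℤ) < n := Int.emod_lt_of_pos _ hn'
  omega

lemma modIdx_cast {y n : ℕ} (hn : 0 < n) :
    (modIdx y n : ℤ) = ((y:ℤ) - 1) % (n:ℤ) + 1 := by
  unfold modIdx
  have hn' : (0:ℤ) < (n:ℤ) := by exact_mod_cast hn
  have h1 : 0 ≤ ((y:ℤ) - 1) % (n:ℤ) := Int.emod_nonneg _ (by omega)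
  omega

lemma modIdx_dvd {y n : ℕ} (hn : 0 < n) : (n:ℤ) ∣ ((y:ℤ) - (modIdx y n : ℤ)) := by
  rw [modIdx_cast hn]
  have h := Int.emod_emod_of_dvd ((y:ℤ)-1) (dvd_refl (n:ℤ))
  have h2 : (n:ℤ) ∣ (((y:ℤ)-1) - ((y:ℤ)-1) % (n:ℤ)) := Int.dvd_self_sub_of_emod_eq rfl
  have : (y:ℤ) - (((y:ℤ) - 1) % (n:ℤ) + 1) = (((y:ℤ)-1) - ((y:ℤ)-1) % (n:ℤ)) := by ring
  rw [this]
  exact h2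

lemma modIdx_eq_iff {y i n : ℕ} (hn : 0 < n) (h1 : 1 ≤ i) (h2 : i ≤ n) :
    modIdx y n = i ↔ (n:ℤ) ∣ ((y:ℤ) - (i:ℤ)) := by
  constructor
  · rintro rfl; exact modIdx_dvd hn
  · intro h
    have hd := modIdx_dvd (y := y) hn
    have hdiff : (n:ℤ) ∣ ((modIdx y n : ℤ) - (i:ℤ)) := by
      have : ((modIdx y n : ℤ) - (i:ℤ)) = ((y:ℤ) - i) - ((y:ℤ) - modIdx y n) := by ring
      rw [this]; exact dvd_sub h hd
    have hb := modIdx_bound (y := y) hn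
    have habs : ((modIdx y n : ℤ) - (i:ℤ)).natAbs < (n:ℤ).natAbs := by
      have := hb.1; have := hb.2
      omega
    have := Int.eq_zero_of_dvd_of_natAbs_lt_natAbs hdiff habs
    omega

lemma ceil_addmul (c t : ℤ) (n : ℕ) (hn : 0 < n) :
    ⌈(((n:ℤ) * c + t : ℤ) : ℚ) / (n:ℚ)⌉ = c + ⌈(t : ℚ) / (n:ℚ)⌉ := by
  have hn' : (n : ℚ) ≠ 0 := by positivity
  have : (((n:ℤ) * c + t : ℤ) : ℚ) / (n:ℚ) = (t:ℚ)/(n:ℚ) + (c:ℤ) := by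
    push_cast; field_simp; ring
  rw [this, Int.ceil_add_intCast]
  ring

lemma ceil_zero_of {i n : ℕ} (h1 : 1 ≤ i) (h2 : i ≤ n) :
    ⌈((1 - (i:ℤ) : ℤ) : ℚ) / (n:ℚ)⌉ = 0 := by
  have hn : 0 < n := lt_of_lt_of_le h1 h2
  have hn' : (0:ℚ) < (n : ℚ) := by positivity
  rw [Int.ceil_eq_zero_iff]
  constructor
  · show (-1:ℚ) < _
    rw [lt_div_iff₀ hn']
    push_cast
    have : (i:ℚ) ≤ (n:ℚ) := by exact_mod_cast h2
    nlinarith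
  · show _ ≤ (0:ℚ)
    apply div_nonpos_of_nonpos_of_nonneg
    · push_cast
      have : (1:ℚ) ≤ (i:ℚ) := by exact_mod_cast h1
      linarith
    · positivity

end Stmt16Aux



namespace Stmt16Aux

lemma engine {K : Type*} [Field K] (m : ℕ) (α : ℕ → K) (P : ℤ → ℕ → K)
    (h0 : ∀ y : ℤ, P y 0 = 1)
    (hrec0 : ∀ e : ℕ, P 0 (e+1) = α m * P (m:ℤ) e)
    (hrecS : ∀ y e : ℕ, P ((y:ℤ)+1) (e+1) =
      P (y:ℤ) (e+1) + α (y + 1 + m) * P ((y:ℤ)+1+(m:ℤ)) e) :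
    ∀ x : ℕ, (∀ y d : ℕ, x = y + (m+1)*d → dyckD m α x y = P (y:ℤ) d)
      ∧ (∀ y : ℕ, (∀ d : ℕ, x ≠ y + (m+1)*d) → dyckD m α x y = 0) := by
  intro x
  induction x with
  | zero =>
      constructor
      · intro y d hyd
        have hy : y = 0 := by omega
        have hd : (m+1)*d = 0 := by omega
        have hd' : d = 0 := by
          rcases Nat.mul_eq_zero.mp hd with h | h
          · omega
          · exact h
        subst hy; subst hd'
        simpa [dyckD] using (h0 0).symm
      · intro y hy
        match y, hy with
        | 0, hy => exact absurd rfl (hy 0)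
        | (z+1), hy => simp [dyckD]
  | succ x ih =>
      constructor
      · intro y d hyd
        cases y with
        | zero =>
            cases d with
            | zero => omega
            | succ e =>
                have hx : x = m + (m+1)*e := by
                  have h1 : (m+1)*(e+1) = (m+1)*e + (m+1) := by ring
                  omega
                show dyckD m α (x+1) 0 = P ((0:ℕ):ℤ) (e+1)
                simp only [dyckD]
                rw [ih.1 m e hx]
                push_cast
                rw [hrec0 e]
        | succ z =>
            cases d with
            | zero =>
                show dyckD m α (x+1) (z+1) = P ((z+1:ℕ):ℤ) 0
                simp only [dyckD]
                rw [ih.1 z 0 (by omega), h0, h0]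
                have hzero : dyckD m α x (z+1+m) = 0 := by
                  apply ih.2
                  intro d'
                  have : z + 1 + m + (m+1)*d' ≥ z + 1 := by omega
                  omega
                rw [hzero]
                ring
            | succ e =>
                have h1 : (m+1)*(e+1) = (m+1)*e + (m+1) := by ring
                have hx1 : x = z + (m+1)*(e+1) := by omega
                have hx2 : x = (z+1+m) + (m+1)*e := by omega
                show dyckD m α (x+1) (z+1) = P ((z+1:ℕ):ℤ) (e+1)
                simp only [dyckD]
                rw [ih.1 z (e+1) hx1, ih.1 (z+1+m) e hx2]
                have := hrecS z e
                push_cast at this ⊢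
                rw [this]
      · intro y hy
        cases y with
        | zero =>
            show dyckD m α (x+1) 0 = 0
            simp only [dyckD]
            have : dyckD m α x m = 0 := by
              apply ih.2
              intro d' hd'
              exact hy (d'+1) (by rw [hd']; ring)
            rw [this, mul_zero]
        | succ z =>
            show dyckD m α (x+1) (z+1) = 0
            simp only [dyckD]
            have hz1 : dyckD m α x z = 0 := by
              apply ih.2
              intro d' hd'
              exact hy d' (by omega)
            have hz2 : dyckD m α x (z+1+m) = 0 := by
              apply ih.2
              intro d' hd'
              refine hy (d'+1) ?_
              rw [hd']; ring
            rw [hz1, hz2]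
            ring
end Stmt16Aux





namespace Stmt16Aux


section Case1
variable {K : Type*} [Field K] [CharZero K]
variable (r s : ℕ) (lam : ℕ → ℕ) (a b : ℕ → K)

/-- The conjectured closed form for all partial Dyck path polynomials, case `r ≥ s`. -/
noncomputable def P1 (y : ℤ) (d : ℕ) : K :=
  (∏ i ∈ Icc 1 (r+1),
      (ascPochhammer K d).eval (aShift r (fun i => if i = r + 1 then 1 else a i) y i)) /
    (((Nat.factorial d : ℕ) : K) * ∏ j ∈ Icc 1 s, (ascPochhammer K d).eval (bShift r lam b y j))

variable {r s lam a b}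

lemma hden (r : ℕ) : ((r:ℚ)+1) = (((r+1:ℕ)):ℚ) := by push_cast; ring

-- step facts for aShift
lemma FA_dvd (hr : 1 ≤ r) {a' : ℕ → K} (Y : ℤ) (i : ℕ)
    (h : (((r+1:ℕ)):ℤ) ∣ (Y - i)) :
    aShift r a' Y i = aShift r a' (Y-1) i + 1 := by
  unfold aShift
  rw [hden r]
  rw [show Y + 1 - (i:ℤ) = (Y - i) + 1 by ring, show Y - 1 + 1 - (i:ℤ) = Y - i by ring]
  rw [ceil_succ_of_dvd _ _ (by omega) h]
  push_cast
  ring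

lemma FA_ndvd (hr : 1 ≤ r) {a' : ℕ → K} (Y : ℤ) (i : ℕ)
    (h : ¬ (((r+1:ℕ)):ℤ) ∣ (Y - i)) :
    aShift r a' Y i = aShift r a' (Y-1) i := by
  unfold aShift
  rw [hden r]
  rw [show Y + 1 - (i:ℤ) = (Y - i) + 1 by ring, show Y - 1 + 1 - (i:ℤ) = Y - i by ring]
  rw [ceil_succ_of_not_dvd _ _ (by omega) h]

lemma FA_jump (hr : 1 ≤ r) {a' : ℕ → K} (Y : ℤ) (i : ℕ) :
    aShift r a' (Y + (r:ℤ)) i = aShift r a' (Y-1) i + 1 := by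
  unfold aShift
  rw [hden r]
  rw [show Y + (r:ℤ) + 1 - (i:ℤ) = (Y - i) + ((r+1:ℕ):ℤ) by push_cast; ring,
    show Y - 1 + 1 - (i:ℤ) = Y - i by ring]
  rw [ceil_shift _ _ (by omega)]
  push_cast
  ring

-- step facts for bShift
lemma FB_dvd (hr : 1 ≤ r) (Y : ℤ) (j : ℕ)
    (h : ((r:ℕ):ℤ) ∣ (Y - lam j)) :
    bShift r lam b Y j = bShift r lam b (Y-1) j + 1 := by
  unfold bShift
  rw [show Y + 1 - (lam j:ℤ) = (Y - lam j) + 1 by ring,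
    show Y - 1 + 1 - (lam j:ℤ) = Y - lam j by ring]
  rw [ceil_succ_of_dvd _ _ (by omega) h]
  push_cast
  ring

lemma FB_ndvd (hr : 1 ≤ r) (Y : ℤ) (j : ℕ)
    (h : ¬ ((r:ℕ):ℤ) ∣ (Y - lam j)) :
    bShift r lam b Y j = bShift r lam b (Y-1) j := by
  unfold bShift
  rw [show Y + 1 - (lam j:ℤ) = (Y - lam j) + 1 by ring,
    show Y - 1 + 1 - (lam j:ℤ) = Y - lam j by ring]
  rw [ceil_succ_of_not_dvd _ _ (by omega) h]

lemma FB_jump_dvd (hr : 1 ≤ r) (Y : ℤ) (j : ℕ)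
    (h : ((r:ℕ):ℤ) ∣ (Y - lam j)) :
    bShift r lam b (Y + (r:ℤ)) j = bShift r lam b (Y-1) j + 2 := by
  unfold bShift
  rw [show Y + (r:ℤ) + 1 - (lam j:ℤ) = ((Y - lam j) + 1) + ((r:ℕ):ℤ) by push_cast; ring,
    show Y - 1 + 1 - (lam j:ℤ) = Y - lam j by ring]
  rw [ceil_shift _ _ (by omega), ceil_succ_of_dvd _ _ (by omega) h]
  push_cast
  ring

lemma FB_jump_ndvd (hr : 1 ≤ r) (Y : ℤ) (j : ℕ)
    (h : ¬ ((r:ℕ):ℤ) ∣ (Y - lam j)) :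
    bShift r lam b (Y + (r:ℤ)) j = bShift r lam b (Y-1) j + 1 := by
  unfold bShift
  rw [show Y + (r:ℤ) + 1 - (lam j:ℤ) = ((Y - lam j) + 1) + ((r:ℕ):ℤ) by push_cast; ring,
    show Y - 1 + 1 - (lam j:ℤ) = Y - lam j by ring]
  rw [ceil_shift _ _ (by omega), ceil_succ_of_not_dvd _ _ (by omega) h]
  push_cast
  ring

-- nonvanishing of the bShift values
lemma Bnz (hr : 1 ≤ r)
    (hb : ∀ j, 1 ≤ j → j ≤ s → ∀ q : ℤ, -1 ≤ q → b j + (q : K) ≠ 0)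
    (hlam : ∀ j, 1 ≤ j → j ≤ s → 1 ≤ lam j ∧ lam j ≤ r)
    (Y : ℤ) (hY : -1 ≤ Y) {j : ℕ} (hj1 : 1 ≤ j) (hj2 : j ≤ s) (t : ℕ) :
    bShift r lam b Y j + (t:K) ≠ 0 := by
  unfold bShift
  have hl := hlam j hj1 hj2
  have hceil : -1 ≤ ⌈((Y + 1 - (lam j:ℤ) : ℤ) : ℚ) / ((r:ℕ):ℚ)⌉ := by
    have h1 : ((-1 : ℤ):ℚ) ≤ ((Y + 1 - (lam j:ℤ) : ℤ) : ℚ) / ((r:ℕ):ℚ) := by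
      rw [le_div_iff₀ (by positivity : (0:ℚ) < ((r:ℕ):ℚ))]
      push_cast
      have h2 : (lam j : ℚ) ≤ (r:ℚ) := by exact_mod_cast hl.2
      have h3 : (-1:ℚ) ≤ (Y:ℚ) := by exact_mod_cast hY
      nlinarith
    have := h1.trans (Int.le_ceil _)
    exact_mod_cast this
  have h5 := hb j hj1 hj2 (⌈((Y + 1 - (lam j:ℤ) : ℤ) : ℚ) / ((r:ℕ):ℚ)⌉ + t) (by omega)
  have h6 : b j + ((⌈((Y + 1 - (lam j:ℤ) : ℤ) : ℚ) / ((r:ℕ):ℚ)⌉ + (t:ℤ) : ℤ) : K)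
      = b j + ((⌈((Y + 1 - (lam j:ℤ) : ℤ) : ℚ) / ((r:ℕ):ℚ)⌉ : ℤ) : K) + (t:K) := by
    push_cast
    ring
  rw [h6] at h5
  exact h5

end Case1
end Stmt16Aux

namespace Stmt16Aux
set_option linter.unusedSectionVars false
section Key1
variable {K : Type*} [Field K] [CharZero K]
variable {r s : ℕ} {lam : ℕ → ℕ} {a b : ℕ → K}


lemma core_marked {K : Type*} [Field K] (u U X1 X2 c C2 Y1 Y2 E F F1 : K)
    (hF1 : F1 = (E+1)*F) (hE1 : E + 1 ≠ 0) (hF : F ≠ 0)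
    (hc0 : c ≠ 0) (hc1 : c+1 ≠ 0) (hc1e : c+1+E ≠ 0) (hC2 : C2 ≠ 0)
    (hY1 : Y1 ≠ 0) (hY2 : Y2 ≠ 0) :
    U * (u + 1 + E) * (X1 * X2) / (F1 * ((c+1) * C2 * (Y1 * Y2)))
      = u * U * (X1 * X2) / (F1 * (c * ((c+1) * C2 / (c+1+E)) * (Y1 * Y2)))
        + (c - u) * X1 / (c * ((c+1) * Y1)) * (U * X2 / (F * (C2 * Y2))) := by
  subst hF1
  have h2 : (E+1)*F * (c * ((c+1) * C2 / (c+1+E)) * (Y1 * Y2))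
      = (E+1)*F * (c * ((c+1) * C2) * (Y1 * Y2)) / (c+1+E) := by
    field_simp
  have h2ne : (E+1)*F * (c * ((c+1) * C2) * (Y1 * Y2)) ≠ 0 := by
    apply_rules [mul_ne_zero]
  have h3ne : c * ((c+1) * Y1) * (F * (C2 * Y2)) ≠ 0 := by
    apply_rules [mul_ne_zero]
  have h1ne : (E+1)*F * ((c+1) * C2 * (Y1 * Y2)) ≠ 0 := by
    apply_rules [mul_ne_zero]
  rw [h2, div_div_eq_mul_div, div_mul_div_comm, div_add_div _ _ h2ne h3ne,
    div_eq_div_iff h1ne (mul_ne_zero h2ne h3ne)]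
  ring

lemma core_generic {K : Type*} [Field K] (u U X1 X2 Y1 Y2 E F F1 : K)
    (hF1 : F1 = (E+1)*F) (hE1 : E + 1 ≠ 0) (hF : F ≠ 0)
    (hY1 : Y1 ≠ 0) (hY2 : Y2 ≠ 0) :
    U * (u + 1 + E) * (X1 * X2) / (F1 * (Y1 * Y2))
      = u * U * (X1 * X2) / (F1 * (Y1 * Y2))
        + X1 / Y1 * (U * X2 / (F * Y2)) := by
  subst hF1
  field_simp
  ring

set_option maxHeartbeats 2000000 in
theorem key1 (hr : 1 ≤ r)
    (hb : ∀ j, 1 ≤ j → j ≤ s → ∀ q : ℤ, -1 ≤ q → b j + (q : K) ≠ 0)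
    (hlam : ∀ j, 1 ≤ j → j ≤ s → 1 ≤ lam j ∧ lam j ≤ r)
    (hlammono : ∀ j j', 1 ≤ j → j < j' → j' ≤ s → lam j < lam j')
    (α : ℕ → K)
    (hgen : ∀ k : ℕ, (∀ ℓ, 1 ≤ ℓ → ℓ ≤ s → modIdx k r ≠ lam ℓ) →
          α (k + r) =
            (∏ i ∈ (Finset.Icc 1 (r + 1)).erase (modIdx k (r + 1)),
                aShift r (fun i => if i = r + 1 then 1 else a i) (k : ℤ) i) /
              ∏ j ∈ Finset.Icc 1 s, bShift r lam b (k : ℤ) j)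
    (hspec : ∀ k ℓ, 1 ≤ ℓ → ℓ ≤ s → modIdx k r = lam ℓ →
          α (k + r) =
            ((bShift r lam b (k : ℤ) ℓ -
                aShift r (fun i => if i = r + 1 then 1 else a i) (k : ℤ) (modIdx k (r + 1))) *
                ∏ i ∈ (Finset.Icc 1 (r + 1)).erase (modIdx k (r + 1)),
                  aShift r (fun i => if i = r + 1 then 1 else a i) (k : ℤ) i) /
              ((bShift r lam b (k : ℤ) ℓ - 1) *
                ∏ j ∈ Finset.Icc 1 s, bShift r lam b (k : ℤ) j))
    (y e : ℕ) :
    P1 r s lam a b (y:ℤ) (e+1)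
      = P1 r s lam a b ((y:ℤ)-1) (e+1)
        + α (y + r) * P1 r s lam a b ((y:ℤ)+(r:ℤ)) e := by
  classical
  set A : ℤ → ℕ → K := aShift r (fun i => if i = r + 1 then 1 else a i) with hAdef
  set B : ℤ → ℕ → K := bShift r lam b with hBdef
  have hrpos : 0 < r + 1 := by omega
  have hFAd : ∀ (W:ℤ) (i:ℕ), ((r+1:ℕ):ℤ) ∣ (W - i) → A W i = A (W-1) i + 1 :=
    fun W i h => FA_dvd hr W i h
  have hFAn : ∀ (W:ℤ) (i:ℕ), ¬ ((r+1:ℕ):ℤ) ∣ (W - i) → A W i = A (W-1) i :=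
    fun W i h => FA_ndvd hr W i h
  have hFAj : ∀ (W:ℤ) (i:ℕ), A (W+(r:ℤ)) i = A (W-1) i + 1 :=
    fun W i => FA_jump hr W i
  have hFBd : ∀ (W:ℤ) (j:ℕ), ((r:ℕ):ℤ) ∣ (W - lam j) → B W j = B (W-1) j + 1 :=
    fun W j h => FB_dvd hr W j h
  have hFBn : ∀ (W:ℤ) (j:ℕ), ¬ ((r:ℕ):ℤ) ∣ (W - lam j) → B W j = B (W-1) j :=
    fun W j h => FB_ndvd hr W j h
  have hFBjd : ∀ (W:ℤ) (j:ℕ), ((r:ℕ):ℤ) ∣ (W - lam j) → B (W+(r:ℤ)) j = B (W-1) j + 2 :=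
    fun W j h => FB_jump_dvd hr W j h
  have hFBjn : ∀ (W:ℤ) (j:ℕ), ¬ ((r:ℕ):ℤ) ∣ (W - lam j) → B (W+(r:ℤ)) j = B (W-1) j + 1 :=
    fun W j h => FB_jump_ndvd hr W j h
  obtain ⟨hi1, hi2⟩ := modIdx_bound (y := y) (n := r+1) hrpos
  set istar : ℕ := modIdx y (r+1) with histdef
  have histmem : istar ∈ Icc 1 (r+1) := mem_Icc.mpr ⟨hi1, hi2⟩
  have hidvd : ((r+1:ℕ):ℤ) ∣ (((y:ℤ)) - istar) := (modIdx_eq_iff hrpos hi1 hi2).mp rfl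
  have hindvd : ∀ i ∈ (Icc 1 (r+1)).erase istar, ¬ ((r+1:ℕ):ℤ) ∣ (((y:ℤ)) - i) := by
    intro i hi hd
    rw [mem_erase, mem_Icc] at hi
    exact hi.1 (((modIdx_eq_iff hrpos hi.2.1 hi.2.2).mpr hd).symm ▸ rfl)
  -- numerator computations
  have hNy : (∏ i ∈ Icc 1 (r+1), (ascPochhammer K (e+1)).eval (A ((y:ℤ)) i))
      = ((ascPochhammer K e).eval (A (((y:ℤ))-1) istar + 1) * ((A (((y:ℤ))-1) istar + 1) + e))
        * ((∏ i ∈ (Icc 1 (r+1)).erase istar, A (((y:ℤ))-1) i)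
          * (∏ i ∈ (Icc 1 (r+1)).erase istar, (ascPochhammer K e).eval (A (((y:ℤ))-1) i + 1))) := by
    rw [← Finset.mul_prod_erase _ _ histmem]
    congr 1
    · rw [hFAd ((y:ℤ)) istar hidvd, ascPochhammer_succ_eval]
    · rw [← Finset.prod_mul_distrib]
      apply Finset.prod_congr rfl
      intro i hi
      rw [hFAn ((y:ℤ)) i (hindvd i hi), poch_succ_left_eval]
  have hNym1 : (∏ i ∈ Icc 1 (r+1), (ascPochhammer K (e+1)).eval (A (((y:ℤ))-1) i))
      = (A (((y:ℤ))-1) istar * (ascPochhammer K e).eval (A (((y:ℤ))-1) istar + 1))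
        * ((∏ i ∈ (Icc 1 (r+1)).erase istar, A (((y:ℤ))-1) i)
          * (∏ i ∈ (Icc 1 (r+1)).erase istar, (ascPochhammer K e).eval (A (((y:ℤ))-1) i + 1))) := by
    rw [← Finset.mul_prod_erase _ _ histmem]
    congr 1
    · rw [poch_succ_left_eval]
    · rw [← Finset.prod_mul_distrib]
      apply Finset.prod_congr rfl
      intro i hi
      rw [poch_succ_left_eval]
  have hNyp : (∏ i ∈ Icc 1 (r+1), (ascPochhammer K e).eval (A (((y:ℤ))+(r:ℤ)) i))
      = (ascPochhammer K e).eval (A (((y:ℤ))-1) istar + 1)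
        * (∏ i ∈ (Icc 1 (r+1)).erase istar, (ascPochhammer K e).eval (A (((y:ℤ))-1) i + 1)) := by
    rw [← Finset.mul_prod_erase _ _ histmem]
    congr 1
    · rw [hFAj ((y:ℤ)) istar]
    · apply Finset.prod_congr rfl
      intro i hi
      rw [hFAj ((y:ℤ)) i]
  -- nonvanishing facts for b-part
  have hBnz' : ∀ (W : ℤ), -1 ≤ W → ∀ j ∈ Icc 1 s, ∀ t : ℕ, B W j + (t:K) ≠ 0 := by
    intro W hW j hj t
    rw [mem_Icc] at hj
    exact Bnz hr hb hlam W hW hj.1 hj.2 t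
  have hYm1 : (-1:ℤ) ≤ ((y:ℤ)) - 1 := by omega
  have hB0 : ∀ j ∈ Icc 1 s, B (((y:ℤ))-1) j ≠ 0 := by
    intro j hj
    simpa using hBnz' (((y:ℤ))-1) hYm1 j hj 0
  have hfe : ((Nat.factorial e : ℕ) : K) ≠ 0 := Nat.cast_ne_zero.mpr (Nat.factorial_ne_zero e)
  have hCnz : ∀ j ∈ Icc 1 s, (ascPochhammer K e).eval (B (((y:ℤ))-1) j + 1) ≠ 0 := by
    intro j hj
    apply poch_ne_zero
    intro q
    have := hBnz' (((y:ℤ))-1) hYm1 j hj (1+q)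
    push_cast at this ⊢
    convert this using 1
    ring
  by_cases hL : ∃ ℓ, 1 ≤ ℓ ∧ ℓ ≤ s ∧ modIdx y r = lam ℓ
  · -- marked case
    obtain ⟨ℓ, hℓ1, hℓ2, hℓeq⟩ := hL
    have hℓmem : ℓ ∈ Icc 1 s := mem_Icc.mpr ⟨hℓ1, hℓ2⟩
    have hlamb := hlam ℓ hℓ1 hℓ2
    have hdvdℓ : ((r:ℕ):ℤ) ∣ (((y:ℤ)) - lam ℓ) :=
      (modIdx_eq_iff (by omega) hlamb.1 hlamb.2).mp hℓeq
    have hinj : ∀ j ∈ (Icc 1 s).erase ℓ, ¬ ((r:ℕ):ℤ) ∣ (((y:ℤ)) - lam j) := by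
      intro j hj hd
      rw [mem_erase, mem_Icc] at hj
      have hlj := hlam j hj.2.1 hj.2.2
      have heq : lam j = lam ℓ := by
        have h1 := (modIdx_eq_iff (y := y) (by omega : 0 < r) hlj.1 hlj.2).mpr hd
        omega
      rcases lt_trichotomy j ℓ with h | h | h
      · exact absurd heq (ne_of_lt (hlammono j ℓ hj.2.1 h hℓ2))
      · exact hj.1 h
      · exact absurd heq.symm (ne_of_lt (hlammono ℓ j hℓ1 h hj.2.2))
    set c : K := B (((y:ℤ))-1) ℓ with hcdef
    -- denominators
    have hDy : (∏ j ∈ Icc 1 s, (ascPochhammer K (e+1)).eval (B ((y:ℤ)) j))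
        = ((c+1) * (ascPochhammer K e).eval (c + 2))
          * ((∏ j ∈ (Icc 1 s).erase ℓ, B (((y:ℤ))-1) j)
            * (∏ j ∈ (Icc 1 s).erase ℓ, (ascPochhammer K e).eval (B (((y:ℤ))-1) j + 1))) := by
      rw [← Finset.mul_prod_erase _ _ hℓmem]
      congr 1
      · rw [hFBd ((y:ℤ)) ℓ hdvdℓ, poch_succ_left_eval, ← hcdef,
          show c + 1 + 1 = c + 2 by ring]
      · rw [← Finset.prod_mul_distrib]
        apply Finset.prod_congr rfl
        intro j hj
        rw [hFBn ((y:ℤ)) j (hinj j hj), poch_succ_left_eval]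
    have hDym1 : (∏ j ∈ Icc 1 s, (ascPochhammer K (e+1)).eval (B (((y:ℤ))-1) j))
        = (c * (ascPochhammer K e).eval (c + 1))
          * ((∏ j ∈ (Icc 1 s).erase ℓ, B (((y:ℤ))-1) j)
            * (∏ j ∈ (Icc 1 s).erase ℓ, (ascPochhammer K e).eval (B (((y:ℤ))-1) j + 1))) := by
      rw [← Finset.mul_prod_erase _ _ hℓmem]
      congr 1
      · rw [poch_succ_left_eval, ← hcdef]
      · rw [← Finset.prod_mul_distrib]
        apply Finset.prod_congr rfl
        intro j hj
        rw [poch_succ_left_eval]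
    have hDyp : (∏ j ∈ Icc 1 s, (ascPochhammer K e).eval (B (((y:ℤ))+(r:ℤ)) j))
        = (ascPochhammer K e).eval (c + 2)
          * (∏ j ∈ (Icc 1 s).erase ℓ, (ascPochhammer K e).eval (B (((y:ℤ))-1) j + 1)) := by
      rw [← Finset.mul_prod_erase _ _ hℓmem]
      congr 1
      · rw [hFBjd ((y:ℤ)) ℓ hdvdℓ, ← hcdef]
      · apply Finset.prod_congr rfl
        intro j hj
        rw [hFBjn ((y:ℤ)) j (hinj j hj)]
    -- α
    have hα : α (y + r)
        = ((c - A ((y:ℤ)-1) istar) * (∏ i ∈ (Icc 1 (r+1)).erase istar, A ((y:ℤ)-1) i))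
          / (c * ((c+1) * ∏ j ∈ (Icc 1 s).erase ℓ, B ((y:ℤ)-1) j)) := by
      rw [hspec y ℓ hℓ1 hℓ2 hℓeq, ← histdef]
      rw [← Finset.mul_prod_erase _ _ hℓmem]
      rw [hFBd _ ℓ hdvdℓ, hFAd _ istar hidvd, ← hcdef]
      rw [Finset.prod_congr rfl (fun i hi => hFAn ((y:ℤ)) i (hindvd i hi))]
      rw [Finset.prod_congr rfl (fun j hj => hFBn ((y:ℤ)) j (hinj j hj))]
      rw [show c + 1 - (A ((y:ℤ)-1) istar + 1) = c - A ((y:ℤ)-1) istar by ring,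
        show c + 1 - 1 = c by ring]
    -- nonvanishing
    have hc0 : c ≠ 0 := hB0 ℓ hℓmem
    have hc1 : c + 1 ≠ 0 := by
      have h' : c + 1 = c + ((1:ℕ):K) := by push_cast; ring
      rw [h']
      exact hBnz' ((y:ℤ)-1) hYm1 ℓ hℓmem 1
    have hc1e : c + 1 + (e:K) ≠ 0 := by
      have h' : c + 1 + (e:K) = c + ((1+e:ℕ):K) := by push_cast; ring
      rw [h']
      exact hBnz' ((y:ℤ)-1) hYm1 ℓ hℓmem (1+e)
    have hC2 : (ascPochhammer K e).eval (c + 2) ≠ 0 := by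
      apply poch_ne_zero
      intro q
      have h' : c + 2 + (q:K) = c + ((2+q:ℕ):K) := by push_cast; ring
      rw [h']
      exact hBnz' ((y:ℤ)-1) hYm1 ℓ hℓmem (2+q)
    have hY1 : (∏ j ∈ (Icc 1 s).erase ℓ, B ((y:ℤ)-1) j) ≠ 0 :=
      Finset.prod_ne_zero_iff.mpr (fun j hj => hB0 j (Finset.mem_of_mem_erase hj))
    have hY2 : (∏ j ∈ (Icc 1 s).erase ℓ, (ascPochhammer K e).eval (B ((y:ℤ)-1) j + 1)) ≠ 0 :=
      Finset.prod_ne_zero_iff.mpr (fun j hj => hCnz j (Finset.mem_of_mem_erase hj))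
    have hVV : (ascPochhammer K e).eval (c+1)
        = ((c+1) * (ascPochhammer K e).eval (c+2)) / (c + 1 + e) := by
      rw [eq_div_iff hc1e]
      have h' := poch_swap e (c+1)
      rw [show c + 1 + 1 = c + 2 by ring] at h'
      exact h'
    simp only [P1]
    rw [← hAdef, ← hBdef]
    rw [hNy, hNym1, hNyp, hDy, hDym1, hDyp, hα, hVV]
    apply core_marked _ _ _ _ _ _ _ _ _ _ _ ?_ ?_ hfe hc0 hc1 hc1e hC2 hY1 hY2
    · push_cast [Nat.factorial_succ]
      ring
    · have h' : ((e+1:ℕ):K) ≠ 0 := Nat.cast_ne_zero.mpr (by omega)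
      push_cast at h'
      exact h'
  · -- generic case
    push_neg at hL
    have hno : ∀ ℓ, 1 ≤ ℓ → ℓ ≤ s → modIdx y r ≠ lam ℓ := fun ℓ h1 h2 => hL ℓ h1 h2
    have hnod : ∀ j ∈ Icc 1 s, ¬ ((r:ℕ):ℤ) ∣ ((y:ℤ) - lam j) := by
      intro j hj hd
      rw [mem_Icc] at hj
      have hlj := hlam j hj.1 hj.2
      exact hno j hj.1 hj.2 ((modIdx_eq_iff (by omega : 0 < r) hlj.1 hlj.2).mpr hd)
    have hDy : (∏ j ∈ Icc 1 s, (ascPochhammer K (e+1)).eval (B ((y:ℤ)) j))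
        = (∏ j ∈ Icc 1 s, B ((y:ℤ)-1) j)
          * (∏ j ∈ Icc 1 s, (ascPochhammer K e).eval (B ((y:ℤ)-1) j + 1)) := by
      rw [← Finset.prod_mul_distrib]
      apply Finset.prod_congr rfl
      intro j hj
      rw [hFBn ((y:ℤ)) j (hnod j hj), poch_succ_left_eval]
    have hDym1 : (∏ j ∈ Icc 1 s, (ascPochhammer K (e+1)).eval (B ((y:ℤ)-1) j))
        = (∏ j ∈ Icc 1 s, B ((y:ℤ)-1) j)
          * (∏ j ∈ Icc 1 s, (ascPochhammer K e).eval (B ((y:ℤ)-1) j + 1)) := by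
      rw [← Finset.prod_mul_distrib]
      apply Finset.prod_congr rfl
      intro j hj
      rw [poch_succ_left_eval]
    have hDyp : (∏ j ∈ Icc 1 s, (ascPochhammer K e).eval (B ((y:ℤ)+(r:ℤ)) j))
        = ∏ j ∈ Icc 1 s, (ascPochhammer K e).eval (B ((y:ℤ)-1) j + 1) := by
      apply Finset.prod_congr rfl
      intro j hj
      rw [hFBjn ((y:ℤ)) j (hnod j hj)]
    have hα : α (y + r)
        = (∏ i ∈ (Icc 1 (r+1)).erase istar, A ((y:ℤ)-1) i)
          / (∏ j ∈ Icc 1 s, B ((y:ℤ)-1) j) := by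
      rw [hgen y hno, ← histdef]
      rw [Finset.prod_congr rfl (fun i hi => hFAn ((y:ℤ)) i (hindvd i hi))]
      rw [Finset.prod_congr rfl (fun j hj => hFBn ((y:ℤ)) j (hnod j hj))]
    have hY1 : (∏ j ∈ Icc 1 s, B ((y:ℤ)-1) j) ≠ 0 :=
      Finset.prod_ne_zero_iff.mpr hB0
    have hY2 : (∏ j ∈ Icc 1 s, (ascPochhammer K e).eval (B ((y:ℤ)-1) j + 1)) ≠ 0 :=
      Finset.prod_ne_zero_iff.mpr hCnz
    simp only [P1]
    rw [← hAdef, ← hBdef]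
    rw [hNy, hNym1, hNyp, hDy, hDym1, hDyp, hα]
    apply core_generic _ _ _ _ _ _ _ _ _ ?_ ?_ hfe hY1 hY2
    · push_cast [Nat.factorial_succ]
      ring
    · have h' : ((e+1:ℕ):K) ≠ 0 := Nat.cast_ne_zero.mpr (by omega)
      push_cast at h'
      exact h'
end Key1
end Stmt16Aux

namespace Stmt16Aux
set_option linter.unusedSectionVars false
section Fin1
variable {K : Type*} [Field K] [CharZero K]
variable {r s : ℕ} {lam : ℕ → ℕ} {a b : ℕ → K}


lemma P1_zero (y : ℤ) : P1 (K := K) r s lam a b y 0 = 1 := by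
  simp [P1]

lemma P1_neg (e : ℕ) : P1 (K := K) r s lam a b (-1) (e+1) = 0 := by
  have hmem : r + 1 ∈ Icc 1 (r+1) := mem_Icc.mpr ⟨by omega, le_refl _⟩
  have hval : aShift r (fun i => if i = r + 1 then 1 else a i) (-1 : ℤ) (r+1) = (0:K) := by
    unfold aShift
    rw [hden r]
    rw [show (-1:ℤ) + 1 - ((r+1:ℕ):ℤ) = ((r+1:ℕ):ℤ) * (-1) + 0 by push_cast; ring]
    rw [ceil_addmul _ _ _ (by omega)]
    norm_num
  have : (∏ i ∈ Icc 1 (r+1),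
      (ascPochhammer K (e+1)).eval
        (aShift r (fun i => if i = r + 1 then 1 else a i) (-1 : ℤ) i)) = 0 := by
    apply Finset.prod_eq_zero hmem
    rw [hval]
    simp
  unfold P1
  rw [this, zero_div]

lemma P1_final (hr : 1 ≤ r) (k d : ℕ) :
    P1 (K := K) r s lam a b (((r+1)*k : ℕ):ℤ) d
      = ((∏ i ∈ Icc 1 r, (ascPochhammer K d).eval (a i + (k:K)))
          * (ascPochhammer K d).eval ((k:K)+1))
        / (((Nat.factorial d : ℕ):K)
          * ∏ j ∈ Icc 1 s,
              (ascPochhammer K d).eval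
                (b j + ((⌈(((k:ℤ) + 1 - (lam j : ℤ) : ℤ) : ℚ) / (r : ℚ)⌉ : ℤ) : K) + (k:K))) := by
  unfold P1
  congr 1
  · rw [Finset.prod_Icc_succ_top (by omega : 1 ≤ r + 1)]
    congr 1
    · apply Finset.prod_congr rfl
      intro i hi
      rw [mem_Icc] at hi
      unfold aShift
      rw [hden r]
      rw [show (((r+1)*k : ℕ):ℤ) + 1 - (i:ℤ) = ((r+1:ℕ):ℤ) * (k:ℤ) + (1 - (i:ℤ)) by
        push_cast; ring]
      rw [ceil_addmul _ _ _ (by omega), ceil_zero_of hi.1 (by omega : i ≤ r + 1)]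
      have hne : ¬ (i = r + 1) := by omega
      congr 1
      push_cast [hne]
      ring
    · unfold aShift
      rw [hden r]
      rw [show (((r+1)*k : ℕ):ℤ) + 1 - ((r+1:ℕ):ℤ) = ((r+1:ℕ):ℤ) * (k:ℤ)
          + (1 - ((r+1:ℕ):ℤ)) by push_cast; ring]
      rw [ceil_addmul _ _ _ (by omega), ceil_zero_of (by omega : 1 ≤ r+1) (le_refl (r+1))]
      congr 1 <;> simp <;> push_cast <;> ring
  · congr 1
    apply Finset.prod_congr rfl
    intro j hj
    unfold bShift
    rw [show (((r+1)*k : ℕ):ℤ) + 1 - ((lam j:ℕ):ℤ) = ((r:ℕ):ℤ) * (k:ℤ)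
        + ((k:ℤ) + 1 - (lam j:ℤ)) by push_cast; ring]
    rw [ceil_addmul _ _ _ (by omega)]
    push_cast
    ring

lemma binom_eval (k d : ℕ) :
    (ascPochhammer K d).eval ((k:K)+1)
      = (((k+d).choose k : ℕ) : K) * ((Nat.factorial d : ℕ):K) := by
  have h1 := factorial_mul_ascPochhammer K k d
  have h2 : (k+d).choose k * (Nat.factorial k) * (Nat.factorial d) = Nat.factorial (k+d) := by
    have := Nat.choose_mul_factorial_mul_factorial (Nat.le_add_right k d)
    simpa using this
  have hk : ((Nat.factorial k : ℕ):K) ≠ 0 := Nat.cast_ne_zero.mpr (Nat.factorial_ne_zero k)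
  apply mul_left_cancel₀ hk
  have h1' : ((Nat.factorial k : ℕ):K) * (ascPochhammer K d).eval ((k:K)+1)
      = ((Nat.factorial (k+d) : ℕ):K) := by
    exact_mod_cast h1
  rw [h1', ← h2]
  push_cast
  ring
end Fin1
end Stmt16Aux


namespace Stmt16Aux
set_option linter.unusedSectionVars false


section Main1
variable {K : Type*} [Field K] [CharZero K]
variable {r s : ℕ} {lam : ℕ → ℕ} {a b : ℕ → K}

set_option maxHeartbeats 1000000 in
theorem case1_main (hr : 1 ≤ r) (hsr : s ≤ r)
    (hb : ∀ j, 1 ≤ j → j ≤ s → ∀ q : ℤ, -1 ≤ q → b j + (q : K) ≠ 0)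
    (hlam : ∀ j, 1 ≤ j → j ≤ s → 1 ≤ lam j ∧ lam j ≤ r)
    (hlammono : ∀ j j', 1 ≤ j → j < j' → j' ≤ s → lam j < lam j')
    (α : ℕ → K)
    (hgen : ∀ k : ℕ, (∀ ℓ, 1 ≤ ℓ → ℓ ≤ s → modIdx k r ≠ lam ℓ) →
          α (k + r) =
            (∏ i ∈ (Finset.Icc 1 (r + 1)).erase (modIdx k (r + 1)),
                aShift r (fun i => if i = r + 1 then 1 else a i) (k : ℤ) i) /
              ∏ j ∈ Finset.Icc 1 s, bShift r lam b (k : ℤ) j)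
    (hspec : ∀ k ℓ, 1 ≤ ℓ → ℓ ≤ s → modIdx k r = lam ℓ →
          α (k + r) =
            ((bShift r lam b (k : ℤ) ℓ -
                aShift r (fun i => if i = r + 1 then 1 else a i) (k : ℤ) (modIdx k (r + 1))) *
                ∏ i ∈ (Finset.Icc 1 (r + 1)).erase (modIdx k (r + 1)),
                  aShift r (fun i => if i = r + 1 then 1 else a i) (k : ℤ) i) /
              ((bShift r lam b (k : ℤ) ℓ - 1) *
                ∏ j ∈ Finset.Icc 1 s, bShift r lam b (k : ℤ) j))
    (n k : ℕ) (hkn : k ≤ n) :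
    dyckD r α ((r+1) * n) ((r+1) * k)
      = (n.choose k : K) *
          (∏ i ∈ Finset.Icc 1 r, (ascPochhammer K (n - k)).eval (a i + (k : K))) /
          ∏ j ∈ Finset.Icc 1 s,
            (ascPochhammer K (n - k)).eval
              (b j + ((⌈(((k : ℤ) + 1 - (lam j : ℤ) : ℤ) : ℚ) / (r : ℚ)⌉ : ℤ) : K) + (k : K)) := by
  have hrec0 : ∀ e : ℕ, P1 (K := K) r s lam a b 0 (e+1) = α r * P1 r s lam a b (r:ℤ) e := by
    intro e
    have h := key1 hr hb hlam hlammono α hgen hspec 0 e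
    norm_num at h
    rw [P1_neg] at h
    rw [h]
    ring
  have hrecS : ∀ y e : ℕ, P1 (K := K) r s lam a b ((y:ℤ)+1) (e+1)
      = P1 r s lam a b (y:ℤ) (e+1) + α (y + 1 + r) * P1 r s lam a b ((y:ℤ)+1+(r:ℤ)) e := by
    intro y e
    have h := key1 hr hb hlam hlammono α hgen hspec (y+1) e
    have e1 : ((y+1:ℕ):ℤ) - 1 = (y:ℤ) := by push_cast; ring
    rw [e1] at h
    have e2 : ((y+1:ℕ):ℤ) = (y:ℤ)+1 := by push_cast; ring
    rw [e2] at h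
    exact h
  have HE := engine r α (P1 r s lam a b) (fun y => P1_zero y) hrec0 hrecS
  have hsplit : (r+1) * n = (r+1) * k + (r+1) * (n - k) := by
    have h1 : k + (n - k) = n := by omega
    calc (r+1) * n = (r+1) * (k + (n-k)) := by rw [h1]
    _ = (r+1) * k + (r+1) * (n - k) := by ring
  have hmain := (HE ((r+1)*n)).1 ((r+1)*k) (n-k) hsplit
  rw [hmain, P1_final hr k (n-k), binom_eval k (n-k)]
  have hkd : k + (n - k) = n := by omega
  rw [hkd]
  have hf : ((Nat.factorial (n-k) : ℕ) : K) ≠ 0 :=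
    Nat.cast_ne_zero.mpr (Nat.factorial_ne_zero _)
  rw [show (∏ i ∈ Finset.Icc 1 r, (ascPochhammer K (n - k)).eval (a i + (k : K)))
        * (((n.choose k : ℕ):K) * ((Nat.factorial (n-k) : ℕ):K))
      = ((Nat.factorial (n-k) : ℕ):K) *
          (((n.choose k : ℕ):K) *
            ∏ i ∈ Finset.Icc 1 r, (ascPochhammer K (n - k)).eval (a i + (k : K))) from by ring]
  rw [mul_div_mul_left _ _ hf]
end Main1
end Stmt16Aux






namespace Stmt16Aux
set_option linter.unusedSectionVars false


lemma hden' (s : ℕ) : ((s:ℚ)+1) = (((s+1:ℕ)):ℚ) := by push_cast; ring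

lemma core_generic2 {K : Type*} [Field K] (X1 X2 c C2 Y1 Y2 E F F1 : K)
    (hF1 : F1 = (E+1)*F) (hE1 : E + 1 ≠ 0) (hF : F ≠ 0)
    (hc0 : c ≠ 0) (hc1 : c+1 ≠ 0) (hc1e : c+1+E ≠ 0) (hC2 : C2 ≠ 0)
    (hY1 : Y1 ≠ 0) (hY2 : Y2 ≠ 0) :
    X1 * X2 / (F1 * ((c+1) * C2 * (Y1 * Y2)))
      = X1 * X2 / (F1 * (c * ((c+1) * C2 / (c+1+E)) * (Y1 * Y2)))
        + -X1 / (c * ((c+1) * Y1)) * (X2 / (F * (C2 * Y2))) := by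
  subst hF1
  have h2 : (E+1)*F * (c * ((c+1) * C2 / (c+1+E)) * (Y1 * Y2))
      = (E+1)*F * (c * ((c+1) * C2) * (Y1 * Y2)) / (c+1+E) := by
    field_simp
  have h2ne : (E+1)*F * (c * ((c+1) * C2) * (Y1 * Y2)) ≠ 0 := by
    apply_rules [mul_ne_zero]
  have h3ne : c * ((c+1) * Y1) * (F * (C2 * Y2)) ≠ 0 := by
    apply_rules [mul_ne_zero]
  have h1ne : (E+1)*F * ((c+1) * C2 * (Y1 * Y2)) ≠ 0 := by
    apply_rules [mul_ne_zero]
  rw [h2, div_div_eq_mul_div, div_mul_div_comm, div_add_div _ _ h2ne h3ne,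
    div_eq_div_iff h1ne (mul_ne_zero h2ne h3ne)]
  ring

section Case2
variable {K : Type*} [Field K] [CharZero K]
variable (r s : ℕ) (sig : ℕ → ℕ) (a b : ℕ → K)

noncomputable def P2 (y : ℤ) (d : ℕ) : K :=
  (∏ i ∈ Icc 1 (r+1),
      (ascPochhammer K d).eval (aShift' s sig (fun i => if i = r + 1 then 1 else a i) y i)) /
    (((Nat.factorial d : ℕ) : K) * ∏ j ∈ Icc 1 s, (ascPochhammer K d).eval (bShift' s b y j))

variable {r s sig a b}

lemma FA'_dvd (hs : 1 ≤ s) {a' : ℕ → K} (Y : ℤ) (i : ℕ)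
    (h : (((s+1:ℕ)):ℤ) ∣ (Y - sig i)) :
    aShift' s sig a' Y i = aShift' s sig a' (Y-1) i + 1 := by
  unfold aShift'
  rw [hden' s]
  rw [show Y + 1 - (sig i:ℤ) = (Y - sig i) + 1 by ring,
    show Y - 1 + 1 - (sig i:ℤ) = Y - sig i by ring]
  rw [ceil_succ_of_dvd _ _ (by omega) h]
  push_cast
  ring

lemma FA'_ndvd (hs : 1 ≤ s) {a' : ℕ → K} (Y : ℤ) (i : ℕ)
    (h : ¬ (((s+1:ℕ)):ℤ) ∣ (Y - sig i)) :
    aShift' s sig a' Y i = aShift' s sig a' (Y-1) i := by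
  unfold aShift'
  rw [hden' s]
  rw [show Y + 1 - (sig i:ℤ) = (Y - sig i) + 1 by ring,
    show Y - 1 + 1 - (sig i:ℤ) = Y - sig i by ring]
  rw [ceil_succ_of_not_dvd _ _ (by omega) h]

lemma FA'_jump (hs : 1 ≤ s) {a' : ℕ → K} (Y : ℤ) (i : ℕ) :
    aShift' s sig a' (Y + (s:ℤ)) i = aShift' s sig a' (Y-1) i + 1 := by
  unfold aShift'
  rw [hden' s]
  rw [show Y + (s:ℤ) + 1 - (sig i:ℤ) = (Y - sig i) + ((s+1:ℕ):ℤ) by push_cast; ring,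
    show Y - 1 + 1 - (sig i:ℤ) = Y - sig i by ring]
  rw [ceil_shift _ _ (by omega)]
  push_cast
  ring

lemma FB'_dvd (hs : 1 ≤ s) (Y : ℤ) (j : ℕ)
    (h : ((s:ℕ):ℤ) ∣ (Y - j)) :
    bShift' s b Y j = bShift' s b (Y-1) j + 1 := by
  unfold bShift'
  rw [show Y + 1 - (j:ℤ) = (Y - j) + 1 by ring,
    show Y - 1 + 1 - (j:ℤ) = Y - j by ring]
  rw [ceil_succ_of_dvd _ _ (by omega) h]
  push_cast
  ring

lemma FB'_ndvd (hs : 1 ≤ s) (Y : ℤ) (j : ℕ)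
    (h : ¬ ((s:ℕ):ℤ) ∣ (Y - j)) :
    bShift' s b Y j = bShift' s b (Y-1) j := by
  unfold bShift'
  rw [show Y + 1 - (j:ℤ) = (Y - j) + 1 by ring,
    show Y - 1 + 1 - (j:ℤ) = Y - j by ring]
  rw [ceil_succ_of_not_dvd _ _ (by omega) h]

lemma FB'_jump_dvd (hs : 1 ≤ s) (Y : ℤ) (j : ℕ)
    (h : ((s:ℕ):ℤ) ∣ (Y - j)) :
    bShift' s b (Y + (s:ℤ)) j = bShift' s b (Y-1) j + 2 := by
  unfold bShift'
  rw [show Y + (s:ℤ) + 1 - (j:ℤ) = ((Y - j) + 1) + ((s:ℕ):ℤ) by push_cast; ring,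
    show Y - 1 + 1 - (j:ℤ) = Y - j by ring]
  rw [ceil_shift _ _ (by omega), ceil_succ_of_dvd _ _ (by omega) h]
  push_cast
  ring

lemma FB'_jump_ndvd (hs : 1 ≤ s) (Y : ℤ) (j : ℕ)
    (h : ¬ ((s:ℕ):ℤ) ∣ (Y - j)) :
    bShift' s b (Y + (s:ℤ)) j = bShift' s b (Y-1) j + 1 := by
  unfold bShift'
  rw [show Y + (s:ℤ) + 1 - (j:ℤ) = ((Y - j) + 1) + ((s:ℕ):ℤ) by push_cast; ring,
    show Y - 1 + 1 - (j:ℤ) = Y - j by ring]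
  rw [ceil_shift _ _ (by omega), ceil_succ_of_not_dvd _ _ (by omega) h]
  push_cast
  ring

lemma Bnz2 (hs : 1 ≤ s)
    (hb : ∀ j, 1 ≤ j → j ≤ s → ∀ q : ℤ, -1 ≤ q → b j + (q : K) ≠ 0)
    (Y : ℤ) (hY : -1 ≤ Y) {j : ℕ} (hj1 : 1 ≤ j) (hj2 : j ≤ s) (t : ℕ) :
    bShift' s b Y j + (t:K) ≠ 0 := by
  unfold bShift'
  have hceil : -1 ≤ ⌈((Y + 1 - (j:ℤ) : ℤ) : ℚ) / ((s:ℕ):ℚ)⌉ := by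
    have h1 : ((-1 : ℤ):ℚ) ≤ ((Y + 1 - (j:ℤ) : ℤ) : ℚ) / ((s:ℕ):ℚ) := by
      rw [le_div_iff₀ (by positivity : (0:ℚ) < ((s:ℕ):ℚ))]
      push_cast
      have h2 : (j : ℚ) ≤ (s:ℚ) := by exact_mod_cast hj2
      have h3 : (-1:ℚ) ≤ (Y:ℚ) := by exact_mod_cast hY
      nlinarith
    have := h1.trans (Int.le_ceil _)
    exact_mod_cast this
  have h5 := hb j hj1 hj2 (⌈((Y + 1 - (j:ℤ) : ℤ) : ℚ) / ((s:ℕ):ℚ)⌉ + t) (by omega)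
  have h6 : b j + ((⌈((Y + 1 - (j:ℤ) : ℤ) : ℚ) / ((s:ℕ):ℚ)⌉ + (t:ℤ) : ℤ) : K)
      = b j + ((⌈((Y + 1 - (j:ℤ) : ℤ) : ℚ) / ((s:ℕ):ℚ)⌉ : ℤ) : K) + (t:K) := by
    push_cast
    ring
  rw [h6] at h5
  exact h5
end Case2
end Stmt16Aux

namespace Stmt16Aux
section Key2
variable {K : Type*} [Field K] [CharZero K]
variable {r s : ℕ} {sig : ℕ → ℕ} {a b : ℕ → K}

set_option maxHeartbeats 2000000 in
theorem key2 (hs : 1 ≤ s) (hrs : r ≤ s)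
    (hb : ∀ j, 1 ≤ j → j ≤ s → ∀ q : ℤ, -1 ≤ q → b j + (q : K) ≠ 0)
    (hsig : ∀ i, 1 ≤ i → i ≤ r → 1 ≤ sig i ∧ sig i ≤ s)
    (hsigmono : ∀ i i', 1 ≤ i → i < i' → i' ≤ r → sig i < sig i')
    (hsigtop : sig (r + 1) = s + 1)
    (α : ℕ → K)
    (hgen : ∀ k : ℕ, (∀ ℓ, 1 ≤ ℓ → ℓ ≤ r + 1 → modIdx k (s + 1) ≠ sig ℓ) →
          α (k + s) =
            -(∏ i ∈ Finset.Icc 1 (r + 1),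
                aShift' s sig (fun i => if i = r + 1 then 1 else a i) (k : ℤ) i) /
              ((bShift' s b (k : ℤ) (modIdx k s) - 1) *
                ∏ j ∈ Finset.Icc 1 s, bShift' s b (k : ℤ) j))
    (hspec : ∀ k ℓ, 1 ≤ ℓ → ℓ ≤ r + 1 → modIdx k (s + 1) = sig ℓ →
          α (k + s) =
            ((bShift' s b (k : ℤ) (modIdx k s) -
                aShift' s sig (fun i => if i = r + 1 then 1 else a i) (k : ℤ) ℓ) *
                ∏ i ∈ (Finset.Icc 1 (r + 1)).erase ℓ,
                  aShift' s sig (fun i => if i = r + 1 then 1 else a i) (k : ℤ) i) /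
              ((bShift' s b (k : ℤ) (modIdx k s) - 1) *
                ∏ j ∈ Finset.Icc 1 s, bShift' s b (k : ℤ) j))
    (y e : ℕ) :
    P2 r s sig a b (y:ℤ) (e+1)
      = P2 r s sig a b ((y:ℤ)-1) (e+1)
        + α (y + s) * P2 r s sig a b ((y:ℤ)+(s:ℤ)) e := by
  classical
  set A : ℤ → ℕ → K := aShift' s sig (fun i => if i = r + 1 then 1 else a i) with hAdef
  set B : ℤ → ℕ → K := bShift' s b with hBdef
  have hFAd : ∀ (W:ℤ) (i:ℕ), ((s+1:ℕ):ℤ) ∣ (W - sig i) → A W i = A (W-1) i + 1 :=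
    fun W i h => FA'_dvd hs W i h
  have hFAn : ∀ (W:ℤ) (i:ℕ), ¬ ((s+1:ℕ):ℤ) ∣ (W - sig i) → A W i = A (W-1) i :=
    fun W i h => FA'_ndvd hs W i h
  have hFAj : ∀ (W:ℤ) (i:ℕ), A (W+(s:ℤ)) i = A (W-1) i + 1 :=
    fun W i => FA'_jump hs W i
  have hFBd : ∀ (W:ℤ) (j:ℕ), ((s:ℕ):ℤ) ∣ (W - j) → B W j = B (W-1) j + 1 :=
    fun W j h => FB'_dvd hs W j h
  have hFBn : ∀ (W:ℤ) (j:ℕ), ¬ ((s:ℕ):ℤ) ∣ (W - j) → B W j = B (W-1) j :=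
    fun W j h => FB'_ndvd hs W j h
  have hFBjd : ∀ (W:ℤ) (j:ℕ), ((s:ℕ):ℤ) ∣ (W - j) → B (W+(s:ℤ)) j = B (W-1) j + 2 :=
    fun W j h => FB'_jump_dvd hs W j h
  have hFBjn : ∀ (W:ℤ) (j:ℕ), ¬ ((s:ℕ):ℤ) ∣ (W - j) → B (W+(s:ℤ)) j = B (W-1) j + 1 :=
    fun W j h => FB'_jump_ndvd hs W j h
  obtain ⟨hj1, hj2⟩ := modIdx_bound (y := y) (n := s) (by omega)
  set jstar : ℕ := modIdx y s with hjdef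
  have hjmem : jstar ∈ Icc 1 s := mem_Icc.mpr ⟨hj1, hj2⟩
  have hjdvd : ((s:ℕ):ℤ) ∣ ((y:ℤ) - jstar) := (modIdx_eq_iff (by omega) hj1 hj2).mp rfl
  have hjndvd : ∀ j ∈ (Icc 1 s).erase jstar, ¬ ((s:ℕ):ℤ) ∣ ((y:ℤ) - j) := by
    intro j hj hd
    rw [mem_erase, mem_Icc] at hj
    exact hj.1 (((modIdx_eq_iff (by omega) hj.2.1 hj.2.2).mpr hd).symm ▸ rfl)
  have hsb : ∀ i, 1 ≤ i → i ≤ r + 1 → 1 ≤ sig i ∧ sig i ≤ s + 1 := by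
    intro i h1 h2
    rcases Nat.lt_or_ge i (r+1) with h | h
    · have := hsig i h1 (by omega)
      omega
    · have : i = r + 1 := by omega
      rw [this, hsigtop]
      omega
  have hmono' : ∀ i i', 1 ≤ i → i < i' → i' ≤ r + 1 → sig i < sig i' := by
    intro i i' h1 h2 h3
    rcases Nat.lt_or_ge i' (r+1) with h | h
    · exact hsigmono i i' h1 h2 (by omega)
    · have hi' : i' = r + 1 := by omega
      rw [hi', hsigtop]
      have := hsig i h1 (by omega)
      omega
  -- b-side computations (independent of subcase)
  set c : K := B ((y:ℤ)-1) jstar with hcdef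
  have hBnz' : ∀ (W : ℤ), -1 ≤ W → ∀ j ∈ Icc 1 s, ∀ t : ℕ, B W j + (t:K) ≠ 0 := by
    intro W hW j hj t
    rw [mem_Icc] at hj
    exact Bnz2 hs hb W hW hj.1 hj.2 t
  have hYm1 : (-1:ℤ) ≤ (y:ℤ) - 1 := by omega
  have hB0 : ∀ j ∈ Icc 1 s, B ((y:ℤ)-1) j ≠ 0 := by
    intro j hj
    simpa using hBnz' ((y:ℤ)-1) hYm1 j hj 0
  have hfe : ((Nat.factorial e : ℕ) : K) ≠ 0 := Nat.cast_ne_zero.mpr (Nat.factorial_ne_zero e)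
  have hCnz : ∀ j ∈ Icc 1 s, (ascPochhammer K e).eval (B ((y:ℤ)-1) j + 1) ≠ 0 := by
    intro j hj
    apply poch_ne_zero
    intro q
    have h' : B ((y:ℤ)-1) j + 1 + (q:K) = B ((y:ℤ)-1) j + ((1+q:ℕ):K) := by push_cast; ring
    rw [h']
    exact hBnz' ((y:ℤ)-1) hYm1 j hj (1+q)
  have hDy : (∏ j ∈ Icc 1 s, (ascPochhammer K (e+1)).eval (B ((y:ℤ)) j))
      = ((c+1) * (ascPochhammer K e).eval (c + 2))
        * ((∏ j ∈ (Icc 1 s).erase jstar, B ((y:ℤ)-1) j)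
          * (∏ j ∈ (Icc 1 s).erase jstar, (ascPochhammer K e).eval (B ((y:ℤ)-1) j + 1))) := by
    rw [← Finset.mul_prod_erase _ _ hjmem]
    congr 1
    · rw [hFBd _ jstar hjdvd, poch_succ_left_eval, ← hcdef, show c + 1 + 1 = c + 2 by ring]
    · rw [← Finset.prod_mul_distrib]
      apply Finset.prod_congr rfl
      intro j hj
      rw [hFBn _ j (hjndvd j hj), poch_succ_left_eval]
  have hDym1 : (∏ j ∈ Icc 1 s, (ascPochhammer K (e+1)).eval (B ((y:ℤ)-1) j))
      = (c * (ascPochhammer K e).eval (c + 1))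
        * ((∏ j ∈ (Icc 1 s).erase jstar, B ((y:ℤ)-1) j)
          * (∏ j ∈ (Icc 1 s).erase jstar, (ascPochhammer K e).eval (B ((y:ℤ)-1) j + 1))) := by
    rw [← Finset.mul_prod_erase _ _ hjmem]
    congr 1
    · rw [poch_succ_left_eval, ← hcdef]
    · rw [← Finset.prod_mul_distrib]
      apply Finset.prod_congr rfl
      intro j hj
      rw [poch_succ_left_eval]
  have hDyp : (∏ j ∈ Icc 1 s, (ascPochhammer K e).eval (B ((y:ℤ)+(s:ℤ)) j))
      = (ascPochhammer K e).eval (c + 2)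
        * (∏ j ∈ (Icc 1 s).erase jstar, (ascPochhammer K e).eval (B ((y:ℤ)-1) j + 1)) := by
    rw [← Finset.mul_prod_erase _ _ hjmem]
    congr 1
    · rw [hFBjd _ jstar hjdvd, ← hcdef]
    · apply Finset.prod_congr rfl
      intro j hj
      rw [hFBjn _ j (hjndvd j hj)]
  have hc0 : c ≠ 0 := hB0 jstar hjmem
  have hc1 : c + 1 ≠ 0 := by
    have h' : c + 1 = c + ((1:ℕ):K) := by push_cast; ring
    rw [h']
    exact hBnz' ((y:ℤ)-1) hYm1 jstar hjmem 1
  have hc1e : c + 1 + (e:K) ≠ 0 := by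
    have h' : c + 1 + (e:K) = c + ((1+e:ℕ):K) := by push_cast; ring
    rw [h']
    exact hBnz' ((y:ℤ)-1) hYm1 jstar hjmem (1+e)
  have hC2 : (ascPochhammer K e).eval (c + 2) ≠ 0 := by
    apply poch_ne_zero
    intro q
    have h' : c + 2 + (q:K) = c + ((2+q:ℕ):K) := by push_cast; ring
    rw [h']
    exact hBnz' ((y:ℤ)-1) hYm1 jstar hjmem (2+q)
  have hY1 : (∏ j ∈ (Icc 1 s).erase jstar, B ((y:ℤ)-1) j) ≠ 0 :=
    Finset.prod_ne_zero_iff.mpr (fun j hj => hB0 j (Finset.mem_of_mem_erase hj))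
  have hY2 : (∏ j ∈ (Icc 1 s).erase jstar, (ascPochhammer K e).eval (B ((y:ℤ)-1) j + 1)) ≠ 0 :=
    Finset.prod_ne_zero_iff.mpr (fun j hj => hCnz j (Finset.mem_of_mem_erase hj))
  have hVV : (ascPochhammer K e).eval (c+1)
      = ((c+1) * (ascPochhammer K e).eval (c+2)) / (c + 1 + e) := by
    rw [eq_div_iff hc1e]
    have h' := poch_swap e (c+1)
    rw [show c + 1 + 1 = c + 2 by ring] at h'
    exact h'
  have hE1 : (e:K) + 1 ≠ 0 := by
    have h' : ((e+1:ℕ):K) ≠ 0 := Nat.cast_ne_zero.mpr (by omega)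
    push_cast at h'
    exact h'
  have hF1 : ((Nat.factorial (e+1) : ℕ) : K) = ((e:K)+1) * ((Nat.factorial e : ℕ):K) := by
    push_cast [Nat.factorial_succ]
    ring
  by_cases hL : ∃ ℓ, 1 ≤ ℓ ∧ ℓ ≤ r + 1 ∧ modIdx y (s+1) = sig ℓ
  · obtain ⟨ℓ, hℓ1, hℓ2, hℓeq⟩ := hL
    have hℓmem : ℓ ∈ Icc 1 (r+1) := mem_Icc.mpr ⟨hℓ1, hℓ2⟩
    have hsbℓ := hsb ℓ hℓ1 hℓ2
    have hdvdA : ((s+1:ℕ):ℤ) ∣ ((y:ℤ) - sig ℓ) :=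
      (modIdx_eq_iff (by omega) hsbℓ.1 hsbℓ.2).mp hℓeq
    have hndA : ∀ i ∈ (Icc 1 (r+1)).erase ℓ, ¬ ((s+1:ℕ):ℤ) ∣ ((y:ℤ) - sig i) := by
      intro i hi hd
      rw [mem_erase, mem_Icc] at hi
      have hsbi := hsb i hi.2.1 hi.2.2
      have heq : sig i = sig ℓ := by
        have h1 := (modIdx_eq_iff (y := y) (by omega : 0 < s + 1) hsbi.1 hsbi.2).mpr hd
        omega
      rcases lt_trichotomy i ℓ with h | h | h
      · exact absurd heq (ne_of_lt (hmono' i ℓ hi.2.1 h hℓ2))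
      · exact hi.1 h
      · exact absurd heq.symm (ne_of_lt (hmono' ℓ i hℓ1 h hi.2.2))
    have hNy : (∏ i ∈ Icc 1 (r+1), (ascPochhammer K (e+1)).eval (A ((y:ℤ)) i))
        = ((ascPochhammer K e).eval (A ((y:ℤ)-1) ℓ + 1) * ((A ((y:ℤ)-1) ℓ + 1) + e))
          * ((∏ i ∈ (Icc 1 (r+1)).erase ℓ, A ((y:ℤ)-1) i)
            * (∏ i ∈ (Icc 1 (r+1)).erase ℓ, (ascPochhammer K e).eval (A ((y:ℤ)-1) i + 1))) := by
      rw [← Finset.mul_prod_erase _ _ hℓmem]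
      congr 1
      · rw [hFAd _ ℓ hdvdA, ascPochhammer_succ_eval]
      · rw [← Finset.prod_mul_distrib]
        apply Finset.prod_congr rfl
        intro i hi
        rw [hFAn _ i (hndA i hi), poch_succ_left_eval]
    have hNym1 : (∏ i ∈ Icc 1 (r+1), (ascPochhammer K (e+1)).eval (A ((y:ℤ)-1) i))
        = (A ((y:ℤ)-1) ℓ * (ascPochhammer K e).eval (A ((y:ℤ)-1) ℓ + 1))
          * ((∏ i ∈ (Icc 1 (r+1)).erase ℓ, A ((y:ℤ)-1) i)
            * (∏ i ∈ (Icc 1 (r+1)).erase ℓ, (ascPochhammer K e).eval (A ((y:ℤ)-1) i + 1))) := by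
      rw [← Finset.mul_prod_erase _ _ hℓmem]
      congr 1
      · rw [poch_succ_left_eval]
      · rw [← Finset.prod_mul_distrib]
        apply Finset.prod_congr rfl
        intro i hi
        rw [poch_succ_left_eval]
    have hNyp : (∏ i ∈ Icc 1 (r+1), (ascPochhammer K e).eval (A ((y:ℤ)+(s:ℤ)) i))
        = (ascPochhammer K e).eval (A ((y:ℤ)-1) ℓ + 1)
          * (∏ i ∈ (Icc 1 (r+1)).erase ℓ, (ascPochhammer K e).eval (A ((y:ℤ)-1) i + 1)) := by
      rw [← Finset.mul_prod_erase _ _ hℓmem]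
      congr 1
      · rw [hFAj ((y:ℤ)) ℓ]
      · apply Finset.prod_congr rfl
        intro i hi
        rw [hFAj ((y:ℤ)) i]
    have hα : α (y + s)
        = ((c - A ((y:ℤ)-1) ℓ) * (∏ i ∈ (Icc 1 (r+1)).erase ℓ, A ((y:ℤ)-1) i))
          / (c * ((c+1) * ∏ j ∈ (Icc 1 s).erase jstar, B ((y:ℤ)-1) j)) := by
      rw [hspec y ℓ hℓ1 hℓ2 hℓeq, ← hjdef]
      rw [← Finset.mul_prod_erase _ _ hjmem]
      rw [hFBd _ jstar hjdvd, hFAd _ ℓ hdvdA, ← hcdef]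
      rw [Finset.prod_congr rfl (fun i hi => hFAn ((y:ℤ)) i (hndA i hi))]
      rw [Finset.prod_congr rfl (fun j hj => hFBn ((y:ℤ)) j (hjndvd j hj))]
      rw [show c + 1 - (A ((y:ℤ)-1) ℓ + 1) = c - A ((y:ℤ)-1) ℓ by ring,
        show c + 1 - 1 = c by ring]
    simp only [P2]
    rw [← hAdef, ← hBdef]
    rw [hNy, hNym1, hNyp, hDy, hDym1, hDyp, hα, hVV]
    exact core_marked _ _ _ _ _ _ _ _ _ _ _ hF1 hE1 hfe hc0 hc1 hc1e hC2 hY1 hY2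
  · push_neg at hL
    have hno : ∀ ℓ, 1 ≤ ℓ → ℓ ≤ r + 1 → modIdx y (s+1) ≠ sig ℓ := fun ℓ h1 h2 => hL ℓ h1 h2
    have hndA : ∀ i ∈ Icc 1 (r+1), ¬ ((s+1:ℕ):ℤ) ∣ ((y:ℤ) - sig i) := by
      intro i hi hd
      rw [mem_Icc] at hi
      have hsbi := hsb i hi.1 hi.2
      exact hno i hi.1 hi.2 ((modIdx_eq_iff (by omega : 0 < s+1) hsbi.1 hsbi.2).mpr hd)
    have hNy : (∏ i ∈ Icc 1 (r+1), (ascPochhammer K (e+1)).eval (A ((y:ℤ)) i))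
        = (∏ i ∈ Icc 1 (r+1), A ((y:ℤ)-1) i)
          * (∏ i ∈ Icc 1 (r+1), (ascPochhammer K e).eval (A ((y:ℤ)-1) i + 1)) := by
      rw [← Finset.prod_mul_distrib]
      apply Finset.prod_congr rfl
      intro i hi
      rw [hFAn ((y:ℤ)) i (hndA i hi), poch_succ_left_eval]
    have hNym1 : (∏ i ∈ Icc 1 (r+1), (ascPochhammer K (e+1)).eval (A ((y:ℤ)-1) i))
        = (∏ i ∈ Icc 1 (r+1), A ((y:ℤ)-1) i)
          * (∏ i ∈ Icc 1 (r+1), (ascPochhammer K e).eval (A ((y:ℤ)-1) i + 1)) := by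
      rw [← Finset.prod_mul_distrib]
      apply Finset.prod_congr rfl
      intro i hi
      rw [poch_succ_left_eval]
    have hNyp : (∏ i ∈ Icc 1 (r+1), (ascPochhammer K e).eval (A ((y:ℤ)+(s:ℤ)) i))
        = ∏ i ∈ Icc 1 (r+1), (ascPochhammer K e).eval (A ((y:ℤ)-1) i + 1) := by
      apply Finset.prod_congr rfl
      intro i hi
      rw [hFAj ((y:ℤ)) i]
    have hα : α (y + s)
        = -(∏ i ∈ Icc 1 (r+1), A ((y:ℤ)-1) i)
          / (c * ((c+1) * ∏ j ∈ (Icc 1 s).erase jstar, B ((y:ℤ)-1) j)) := by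
      rw [hgen y hno, ← hjdef]
      rw [← Finset.mul_prod_erase _ _ hjmem]
      rw [hFBd _ jstar hjdvd, ← hcdef]
      rw [Finset.prod_congr rfl (fun i hi => hFAn ((y:ℤ)) i (hndA i hi))]
      rw [Finset.prod_congr rfl (fun j hj => hFBn ((y:ℤ)) j (hjndvd j hj))]
      rw [show c + 1 - 1 = c by ring]
    simp only [P2]
    rw [← hAdef, ← hBdef]
    rw [hNy, hNym1, hNyp, hDy, hDym1, hDyp, hα, hVV]
    exact core_generic2 _ _ _ _ _ _ _ _ _ hF1 hE1 hfe hc0 hc1 hc1e hC2 hY1 hY2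
end Key2
end Stmt16Aux

namespace Stmt16Aux
section Fin2
variable {K : Type*} [Field K] [CharZero K]
variable {r s : ℕ} {sig : ℕ → ℕ} {a b : ℕ → K}

lemma P2_zero (y : ℤ) : P2 (K := K) r s sig a b y 0 = 1 := by
  simp [P2]

lemma P2_neg (hsigtop : sig (r + 1) = s + 1) (e : ℕ) :
    P2 (K := K) r s sig a b (-1) (e+1) = 0 := by
  have hmem : r + 1 ∈ Icc 1 (r+1) := mem_Icc.mpr ⟨by omega, le_refl _⟩
  have hval : aShift' s sig (fun i => if i = r + 1 then 1 else a i) (-1 : ℤ) (r+1) = (0:K) := by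
    unfold aShift'
    rw [hden' s, hsigtop]
    rw [show (-1:ℤ) + 1 - ((s+1:ℕ):ℤ) = ((s+1:ℕ):ℤ) * (-1) + 0 by push_cast; ring]
    rw [ceil_addmul _ _ _ (by omega)]
    norm_num
  have : (∏ i ∈ Icc 1 (r+1),
      (ascPochhammer K (e+1)).eval
        (aShift' s sig (fun i => if i = r + 1 then 1 else a i) (-1 : ℤ) i)) = 0 := by
    apply Finset.prod_eq_zero hmem
    rw [hval]
    simp
  unfold P2
  rw [this, zero_div]

lemma P2_final (hs : 1 ≤ s)
    (hsb : ∀ i, 1 ≤ i → i ≤ r + 1 → 1 ≤ sig i ∧ sig i ≤ s + 1) (k d : ℕ) :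
    P2 (K := K) r s sig a b (((s+1)*k : ℕ):ℤ) d
      = ((∏ i ∈ Icc 1 r, (ascPochhammer K d).eval (a i + (k:K)))
          * (ascPochhammer K d).eval ((k:K)+1))
        / (((Nat.factorial d : ℕ):K)
          * ∏ j ∈ Icc 1 s,
              (ascPochhammer K d).eval
                (b j + ((⌈(((k:ℤ) + 1 - (j : ℤ) : ℤ) : ℚ) / (s : ℚ)⌉ : ℤ) : K) + (k:K))) := by
  unfold P2
  congr 1
  · rw [Finset.prod_Icc_succ_top (by omega : 1 ≤ r + 1)]
    congr 1
    · apply Finset.prod_congr rfl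
      intro i hi
      rw [mem_Icc] at hi
      have hsbi := hsb i hi.1 (by omega)
      unfold aShift'
      rw [hden' s]
      rw [show (((s+1)*k : ℕ):ℤ) + 1 - (sig i:ℤ) = ((s+1:ℕ):ℤ) * (k:ℤ) + (1 - (sig i:ℤ)) by
        push_cast; ring]
      rw [ceil_addmul _ _ _ (by omega), ceil_zero_of hsbi.1 hsbi.2]
      have hne : ¬ (i = r + 1) := by omega
      congr 1
      push_cast [hne]
      ring
    · have hsbi := hsb (r+1) (by omega) (le_refl _)
      unfold aShift'
      rw [hden' s]
      rw [show (((s+1)*k : ℕ):ℤ) + 1 - (sig (r+1):ℤ) = ((s+1:ℕ):ℤ) * (k:ℤ)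
          + (1 - (sig (r+1):ℤ)) by push_cast; ring]
      rw [ceil_addmul _ _ _ (by omega), ceil_zero_of hsbi.1 hsbi.2]
      congr 1 <;> simp <;> push_cast <;> ring
  · congr 1
    apply Finset.prod_congr rfl
    intro j hj
    unfold bShift'
    rw [show (((s+1)*k : ℕ):ℤ) + 1 - ((j:ℕ):ℤ) = ((s:ℕ):ℤ) * (k:ℤ)
        + ((k:ℤ) + 1 - (j:ℤ)) by push_cast; ring]
    rw [ceil_addmul _ _ _ (by omega)]
    push_cast
    ring

set_option maxHeartbeats 1000000 in
theorem case2_main (hs : 1 ≤ s) (hrs : r ≤ s)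
    (lam : ℕ → ℕ)
    (hb : ∀ j, 1 ≤ j → j ≤ s → ∀ q : ℤ, -1 ≤ q → b j + (q : K) ≠ 0)
    (hlamid : ∀ j, 1 ≤ j → j ≤ s → lam j = j)
    (hsig : ∀ i, 1 ≤ i → i ≤ r → 1 ≤ sig i ∧ sig i ≤ s)
    (hsigmono : ∀ i i', 1 ≤ i → i < i' → i' ≤ r → sig i < sig i')
    (hsigtop : sig (r + 1) = s + 1)
    (α : ℕ → K)
    (hgen : ∀ k : ℕ, (∀ ℓ, 1 ≤ ℓ → ℓ ≤ r + 1 → modIdx k (s + 1) ≠ sig ℓ) →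
          α (k + s) =
            -(∏ i ∈ Finset.Icc 1 (r + 1),
                aShift' s sig (fun i => if i = r + 1 then 1 else a i) (k : ℤ) i) /
              ((bShift' s b (k : ℤ) (modIdx k s) - 1) *
                ∏ j ∈ Finset.Icc 1 s, bShift' s b (k : ℤ) j))
    (hspec : ∀ k ℓ, 1 ≤ ℓ → ℓ ≤ r + 1 → modIdx k (s + 1) = sig ℓ →
          α (k + s) =
            ((bShift' s b (k : ℤ) (modIdx k s) -
                aShift' s sig (fun i => if i = r + 1 then 1 else a i) (k : ℤ) ℓ) *
                ∏ i ∈ (Finset.Icc 1 (r + 1)).erase ℓ,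
                  aShift' s sig (fun i => if i = r + 1 then 1 else a i) (k : ℤ) i) /
              ((bShift' s b (k : ℤ) (modIdx k s) - 1) *
                ∏ j ∈ Finset.Icc 1 s, bShift' s b (k : ℤ) j))
    (n k : ℕ) (hkn : k ≤ n) :
    dyckD s α ((s+1) * n) ((s+1) * k)
      = (n.choose k : K) *
          (∏ i ∈ Finset.Icc 1 r, (ascPochhammer K (n - k)).eval (a i + (k : K))) /
          ∏ j ∈ Finset.Icc 1 s,
            (ascPochhammer K (n - k)).eval
              (b j + ((⌈(((k : ℤ) + 1 - (lam j : ℤ) : ℤ) : ℚ) / (s : ℚ)⌉ : ℤ) : K) + (k : K)) := by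
  have hsb : ∀ i, 1 ≤ i → i ≤ r + 1 → 1 ≤ sig i ∧ sig i ≤ s + 1 := by
    intro i h1 h2
    rcases Nat.lt_or_ge i (r+1) with h | h
    · have := hsig i h1 (by omega)
      omega
    · have : i = r + 1 := by omega
      rw [this, hsigtop]
      omega
  have hrec0 : ∀ e : ℕ, P2 (K := K) r s sig a b 0 (e+1) = α s * P2 r s sig a b (s:ℤ) e := by
    intro e
    have h := key2 hs hrs hb hsig hsigmono hsigtop α hgen hspec 0 e
    norm_num at h
    rw [P2_neg hsigtop] at h
    rw [h]
    ring
  have hrecS : ∀ y e : ℕ, P2 (K := K) r s sig a b ((y:ℤ)+1) (e+1)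
      = P2 r s sig a b (y:ℤ) (e+1) + α (y + 1 + s) * P2 r s sig a b ((y:ℤ)+1+(s:ℤ)) e := by
    intro y e
    have h := key2 hs hrs hb hsig hsigmono hsigtop α hgen hspec (y+1) e
    have e1 : ((y+1:ℕ):ℤ) - 1 = (y:ℤ) := by push_cast; ring
    rw [e1] at h
    have e2 : ((y+1:ℕ):ℤ) = (y:ℤ)+1 := by push_cast; ring
    rw [e2] at h
    exact h
  have HE := engine s α (P2 r s sig a b) (fun y => P2_zero y) hrec0 hrecS
  have hsplit : (s+1) * n = (s+1) * k + (s+1) * (n - k) := by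
    have h1 : k + (n - k) = n := by omega
    calc (s+1) * n = (s+1) * (k + (n-k)) := by rw [h1]
    _ = (s+1) * k + (s+1) * (n - k) := by ring
  have hmain := (HE ((s+1)*n)).1 ((s+1)*k) (n-k) hsplit
  rw [hmain, P2_final hs hsb k (n-k), binom_eval k (n-k)]
  have hkd : k + (n - k) = n := by omega
  rw [hkd]
  have hf : ((Nat.factorial (n-k) : ℕ) : K) ≠ 0 :=
    Nat.cast_ne_zero.mpr (Nat.factorial_ne_zero _)
  rw [show (∏ i ∈ Finset.Icc 1 r, (ascPochhammer K (n - k)).eval (a i + (k : K)))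
        * (((n.choose k : ℕ):K) * ((Nat.factorial (n-k) : ℕ):K))
      = ((Nat.factorial (n-k) : ℕ):K) *
          (((n.choose k : ℕ):K) *
            ∏ i ∈ Finset.Icc 1 r, (ascPochhammer K (n - k)).eval (a i + (k : K))) from by ring]
  rw [mul_div_mul_left _ _ hf]
  congr 1
  apply Finset.prod_congr rfl
  intro j hj
  rw [mem_Icc] at hj
  rw [hlamid j hj.1 hj.2]
end Fin2
end Stmt16Aux


/-- Explicit formula for the generalised `m`-Stieltjes–Rogers polynomials associated with
the branched-continued-fraction coefficients with `a_{r+1} := 1`: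
`S^{(m)}_{n,k}(α) = D((m+1)n, (m+1)k) = C(n,k)·∏_i (a_i+k)_{n−k} / ∏_j (b_j^{(k)}+k)_{n−k}`
with `b_j^{(k)} = b_j + ⌈(k+1−λ_j)/m⌉`. -/
theorem stmt16 {K : Type*} [Field K] [CharZero K]
    (r s : ℕ) (hm : 1 ≤ max r s)
    (lam sig : ℕ → ℕ) (a b : ℕ → K)
    (hb : ∀ j, 1 ≤ j → j ≤ s → ∀ q : ℤ, -1 ≤ q → b j + (q : K) ≠ 0)
    (α : ℕ → K)
    (hα0 : ∀ j, j < max r s → α j = 0)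
    (hcase :
      (s ≤ r ∧
        (∀ j, 1 ≤ j → j ≤ s → 1 ≤ lam j ∧ lam j ≤ r) ∧
        (∀ j j', 1 ≤ j → j < j' → j' ≤ s → lam j < lam j') ∧
        (∀ k : ℕ, (∀ ℓ, 1 ≤ ℓ → ℓ ≤ s → modIdx k r ≠ lam ℓ) →
          α (k + r) =
            (∏ i ∈ (Finset.Icc 1 (r + 1)).erase (modIdx k (r + 1)),
                aShift r (fun i => if i = r + 1 then 1 else a i) (k : ℤ) i) /
              ∏ j ∈ Finset.Icc 1 s, bShift r lam b (k : ℤ) j) ∧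
        (∀ k ℓ, 1 ≤ ℓ → ℓ ≤ s → modIdx k r = lam ℓ →
          α (k + r) =
            ((bShift r lam b (k : ℤ) ℓ -
                aShift r (fun i => if i = r + 1 then 1 else a i) (k : ℤ) (modIdx k (r + 1))) *
                ∏ i ∈ (Finset.Icc 1 (r + 1)).erase (modIdx k (r + 1)),
                  aShift r (fun i => if i = r + 1 then 1 else a i) (k : ℤ) i) /
              ((bShift r lam b (k : ℤ) ℓ - 1) *
                ∏ j ∈ Finset.Icc 1 s, bShift r lam b (k : ℤ) j))) ∨
      (r ≤ s ∧
        (∀ j, 1 ≤ j → j ≤ s → lam j = j) ∧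
        (∀ i, 1 ≤ i → i ≤ r → 1 ≤ sig i ∧ sig i ≤ s) ∧
        (∀ i i', 1 ≤ i → i < i' → i' ≤ r → sig i < sig i') ∧
        sig (r + 1) = s + 1 ∧
        (∀ k : ℕ, (∀ ℓ, 1 ≤ ℓ → ℓ ≤ r + 1 → modIdx k (s + 1) ≠ sig ℓ) →
          α (k + s) =
            -(∏ i ∈ Finset.Icc 1 (r + 1),
                aShift' s sig (fun i => if i = r + 1 then 1 else a i) (k : ℤ) i) /
              ((bShift' s b (k : ℤ) (modIdx k s) - 1) *
                ∏ j ∈ Finset.Icc 1 s, bShift' s b (k : ℤ) j)) ∧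
        (∀ k ℓ, 1 ≤ ℓ → ℓ ≤ r + 1 → modIdx k (s + 1) = sig ℓ →
          α (k + s) =
            ((bShift' s b (k : ℤ) (modIdx k s) -
                aShift' s sig (fun i => if i = r + 1 then 1 else a i) (k : ℤ) ℓ) *
                ∏ i ∈ (Finset.Icc 1 (r + 1)).erase ℓ,
                  aShift' s sig (fun i => if i = r + 1 then 1 else a i) (k : ℤ) i) /
              ((bShift' s b (k : ℤ) (modIdx k s) - 1) *
                ∏ j ∈ Finset.Icc 1 s, bShift' s b (k : ℤ) j)))) :
    ∀ n k : ℕ, k ≤ n →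
      dyckD (max r s) α ((max r s + 1) * n) ((max r s + 1) * k)
        = (n.choose k : K) *
            (∏ i ∈ Finset.Icc 1 r,
              (ascPochhammer K (n - k)).eval (a i + (k : K))) /
            ∏ j ∈ Finset.Icc 1 s,
              (ascPochhammer K (n - k)).eval
                (b j + ((⌈(((k : ℤ) + 1 - (lam j : ℤ) : ℤ) : ℚ) / (max r s : ℚ)⌉ : ℤ) : K) +
                  (k : K)) := by
  classical
  rcases hcase with h1 | h2
  · obtain ⟨hsr, hlam, hlammono, hgen, hspec⟩ := h1
    have hmr : max r s = r := Nat.max_eq_left hsr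
    have hq : (r:ℚ) ⊔ (s:ℚ) = (r:ℚ) := sup_eq_left.mpr (by exact_mod_cast hsr)
    rw [hmr] at hm ⊢
    rw [hq]
    intro n k hkn
    exact Stmt16Aux.case1_main hm hsr hb hlam hlammono α hgen hspec n k hkn
  · obtain ⟨hrs, hlamid, hsig, hsigmono, hsigtop, hgen, hspec⟩ := h2
    have hms : max r s = s := Nat.max_eq_right hrs
    have hq : (r:ℚ) ⊔ (s:ℚ) = (s:ℚ) := sup_eq_right.mpr (by exact_mod_cast hrs)
    rw [hms] at hm ⊢
    rw [hq]
    intro n k hkn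
    exact Stmt16Aux.case2_main hm hrs lam hb hlamid hsig hsigmono hsigtop α hgen hspec n k hkn
end
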